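/- arXiv:2107.05788 — 2 statements merged into one kernel-verified Lean document; each statement's English description precedes it below -/
import Mathlib

section
/- Let n = p0+p1+p2+p3+p4-3, let A be the Batyrev matrix determined by integers p0,p1,p2,p3,p4 ≥ 1 and nonnegative integers b_1,…,b_{p3}, c_2,…,c_{p2}, and let d,e,f be nonnegative integers with normalized height vector h = h(d,e,f). Then P(A,h) is a lattice polytope: it is a bounded set equal to the convex hull (over ℝ) of its set of integer points P(A,h) ∩ ℤ^n. -/
open Finset Pointwise

/-- Column index type for the Batyrev matrix:
left part `S = {v₁,…,v_{p0}, u₂,…,u_{p4}, y₂,…,y_{p1}}`,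
right part `J = {t₁,…,t_{p3}, z₂,…,z_{p2}}`. -/
abbrev BCol (p0 p1 p2 p3 p4 : ℕ) :=
  (Fin p0 ⊕ (Fin (p4 - 1) ⊕ Fin (p1 - 1))) ⊕ (Fin p3 ⊕ Fin (p2 - 1))

/-- Row index type: `v₁,…,v_{p0}`, `u₁,…,u_{p4}` (index 0 is u₁),
`y₁,…,y_{p1}` (index 0 is y₁), `t₁,…,t_{p3}`, `z₁,…,z_{p2}` (index 0 is z₁). -/
abbrev BRow (p0 p1 p2 p3 p4 : ℕ) :=
  Fin p0 ⊕ (Fin p4 ⊕ (Fin p1 ⊕ (Fin p3 ⊕ Fin p2)))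

/-- The Batyrev matrix. -/
def batyrevA (p0 p1 p2 p3 p4 : ℕ) (b : Fin p3 → ℤ) (c : Fin (p2 - 1) → ℤ) :
    BRow p0 p1 p2 p3 p4 → BCol p0 p1 p2 p3 p4 → ℤ
  | .inl i, .inl (.inl i') => if (i : ℕ) = (i' : ℕ) then 1 else 0
  | .inl _, _ => 0
  | .inr (.inl j), .inl (.inl _) => if (j : ℕ) = 0 then -1 else 0
  | .inr (.inl j), .inl (.inr (.inl j')) =>
      if (j : ℕ) = 0 then -1 else if (j : ℕ) = (j' : ℕ) + 1 then 1 else 0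
  | .inr (.inl _), .inl (.inr (.inr _)) => 0
  | .inr (.inl j), .inr (.inl i) => if (j : ℕ) = 0 then b i else 0
  | .inr (.inl j), .inr (.inr k) => if (j : ℕ) = 0 then c k else 0
  | .inr (.inr (.inl j)), .inl (.inl _) => if (j : ℕ) = 0 then -1 else 0
  | .inr (.inr (.inl _)), .inl (.inr (.inl _)) => 0
  | .inr (.inr (.inl j)), .inl (.inr (.inr j')) =>
      if (j : ℕ) = 0 then -1 else if (j : ℕ) = (j' : ℕ) + 1 then 1 else 0
  | .inr (.inr (.inl j)), .inr (.inl i) => if (j : ℕ) = 0 then b i + 1 else 0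
  | .inr (.inr (.inl j)), .inr (.inr k) => if (j : ℕ) = 0 then c k else 0
  | .inr (.inr (.inr (.inl i))), .inr (.inl i') => if (i : ℕ) = (i' : ℕ) then 1 else 0
  | .inr (.inr (.inr (.inl _))), _ => 0
  | .inr (.inr (.inr (.inr j))), .inr (.inl _) => if (j : ℕ) = 0 then -1 else 0
  | .inr (.inr (.inr (.inr j))), .inr (.inr j') =>
      if (j : ℕ) = 0 then -1 else if (j : ℕ) = (j' : ℕ) + 1 then 1 else 0
  | .inr (.inr (.inr (.inr _))), .inl _ => 0

/-- The normalized height vector `h(d,e,f)`: entry `d` at `v₁`, `f` at `u₁`,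
`e+f` at `z₁`, and `0` elsewhere. -/
def batyrevH (p0 p1 p2 p3 p4 : ℕ) (d e f : ℤ) : BRow p0 p1 p2 p3 p4 → ℤ
  | .inl i => if (i : ℕ) = 0 then d else 0
  | .inr (.inl j) => if (j : ℕ) = 0 then f else 0
  | .inr (.inr (.inr (.inr j))) => if (j : ℕ) = 0 then e + f else 0
  | _ => 0

/-- `P(A,h) = {x ∈ ℝⁿ : (Ax)ᵢ ≥ -hᵢ}`. -/
def polyP {ι κ : Type*} [Fintype κ] (A : ι → κ → ℤ) (h : ι → ℤ) : Set (κ → ℝ) :=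
  {x | ∀ i, -(h i : ℝ) ≤ ∑ j, (A i j : ℝ) * x j}

/-- The set of integral points of `ℝ^κ`. -/
def intZ {κ : Type*} : Set (κ → ℝ) := {x | ∀ j, ∃ k : ℤ, x j = (k : ℝ)}

set_option maxHeartbeats 1000000
section Generic
variable {ι κ : Type*} [Fintype ι] [Fintype κ] (A : ι → κ → ℤ) (h : ι → ℤ)

lemma polyP_convex : Convex ℝ (polyP A h) := by
  intro x hx y hy a b ha hb hab
  intro i
  have hsum : ∑ j, (A i j : ℝ) * (a • x + b • y) j
      = a * (∑ j, (A i j : ℝ) * x j) + b * (∑ j, (A i j : ℝ) * y j) := by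
    rw [Finset.mul_sum, Finset.mul_sum, ← Finset.sum_add_distrib]
    refine Finset.sum_congr rfl fun j _ => ?_
    simp [Pi.add_apply, Pi.smul_apply, smul_eq_mul]; ring
  rw [hsum]
  have h1 := mul_le_mul_of_nonneg_left (hx i) ha
  have h2 := mul_le_mul_of_nonneg_left (hy i) hb
  have h3 : a * -(h i : ℝ) + b * -(h i : ℝ) = -(h i : ℝ) := by
    rw [← add_mul, hab, one_mul]
  linarith

lemma polyP_closed : IsClosed (polyP A h) := by
  have : polyP A h = ⋂ i, {x : κ → ℝ | -(h i : ℝ) ≤ ∑ j, (A i j : ℝ) * x j} := by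
    ext x; simp [polyP, Set.mem_iInter]
  rw [this]
  refine isClosed_iInter fun i => ?_
  exact isClosed_le continuous_const
    (continuous_finset_sum _ fun j _ => (continuous_const.mul (continuous_apply j)))

/-- The perturbation tool: at an extreme point, any direction `g` whose dot with every
tight row is zero and which only "moves" slack rows must be zero. -/
lemma extreme_perturb {x : κ → ℝ}
    (hx : x ∈ Set.extremePoints ℝ (polyP A h)) (g : κ → ℝ)
    (hg : ∀ i, (∑ j, (A i j : ℝ) * g j = 0) ∨ (-(h i : ℝ) < ∑ j, (A i j : ℝ) * x j)) :
    g = 0 := by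
  classical
  obtain ⟨hxP, hext⟩ := hx
  set dot : ι → ℝ := fun i => ∑ j, (A i j : ℝ) * g j with hdot
  set s : Finset ι := Finset.univ.filter (fun i => dot i ≠ 0) with hs
  have hslack : ∀ i ∈ s, 0 < (∑ j, (A i j : ℝ) * x j) + (h i : ℝ) := by
    intro i hi
    rw [hs, Finset.mem_filter] at hi
    rcases hg i with h0 | hlt
    · exact absurd h0 hi.2
    · linarith
  set ε : ℝ := if hne : s.Nonempty then
      min 1 (s.inf' hne fun i => ((∑ j, (A i j : ℝ) * x j) + (h i : ℝ)) / |dot i|) else 1 with hε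
  have hεpos : 0 < ε := by
    rw [hε]
    split_ifs with hne
    · refine lt_min one_pos ?_
      rw [Finset.lt_inf'_iff]
      intro i hi
      exact div_pos (hslack i hi) (abs_pos.2 (by simpa [hs] using (Finset.mem_filter.1 hi).2))
    · exact one_pos
  have hkey : ∀ i, |ε * dot i| ≤ (∑ j, (A i j : ℝ) * x j) + (h i : ℝ) ∨ dot i = 0 := by
    intro i
    by_cases h0 : dot i = 0
    · exact Or.inr h0
    · left
      have hi : i ∈ s := by rw [hs, Finset.mem_filter]; exact ⟨Finset.mem_univ _, h0⟩
      have hle : ε ≤ ((∑ j, (A i j : ℝ) * x j) + (h i : ℝ)) / |dot i| := by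
        rw [hε]
        rw [dif_pos ⟨i, hi⟩]
        exact le_trans (min_le_right _ _) (Finset.inf'_le _ hi)
      rw [abs_mul, abs_of_pos hεpos]
      calc ε * |dot i| ≤ (((∑ j, (A i j : ℝ) * x j) + (h i : ℝ)) / |dot i|) * |dot i| :=
            mul_le_mul_of_nonneg_right hle (abs_nonneg _)
        _ = (∑ j, (A i j : ℝ) * x j) + (h i : ℝ) := by
            field_simp
  have hmem : ∀ (σ : ℝ), |σ| = ε → x + σ • g ∈ polyP A h := by
    intro σ hσ i
    have hsum : ∑ j, (A i j : ℝ) * (x + σ • g) j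
        = (∑ j, (A i j : ℝ) * x j) + σ * dot i := by
      rw [hdot, Finset.mul_sum, ← Finset.sum_add_distrib]
      refine Finset.sum_congr rfl fun j _ => ?_
      simp [Pi.add_apply, Pi.smul_apply, smul_eq_mul]; ring
    rw [hsum]
    rcases hkey i with hb | h0
    · have habs : |σ * dot i| ≤ (∑ j, (A i j : ℝ) * x j) + (h i : ℝ) := by
        rw [abs_mul, hσ]
        rw [abs_mul, abs_of_pos hεpos] at hb
        exact hb
      have := abs_le.1 habs
      linarith [this.1]
    · rw [h0, mul_zero, add_zero]; exact hxP i
  have h1 : x + ε • g ∈ polyP A h := hmem ε (abs_of_pos hεpos)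
  have h2 : x + (-ε) • g ∈ polyP A h := hmem (-ε) (by rw [abs_neg, abs_of_pos hεpos])
  have hseg : x ∈ openSegment ℝ (x + ε • g) (x + (-ε) • g) := by
    refine ⟨1/2, 1/2, by norm_num, by norm_num, by norm_num, ?_⟩
    funext j
    simp only [Pi.add_apply, Pi.smul_apply, smul_eq_mul, Pi.neg_apply, neg_smul]
    ring
  have := hext h1 h2 hseg
  have hg0 : ε • g = 0 := by
    have := congrArg (fun y => y - x) this
    simpa [add_sub_cancel_left] using this
  funext j
  have := congrFun hg0 j
  simp only [Pi.smul_apply, smul_eq_mul, Pi.zero_apply] at this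
  rcases mul_eq_zero.1 this with h | h
  · exact absurd h (ne_of_gt hεpos)
  · simpa using h

end Generic
section Rows
variable {p0 p1 p2 p3 p4 : ℕ} (b : Fin p3 → ℤ) (c : Fin (p2 - 1) → ℤ)

local notation "Col" => BCol p0 p1 p2 p3 p4
local notation "A" => batyrevA p0 p1 p2 p3 p4 b c

def vcol (i : Fin p0) : BCol p0 p1 p2 p3 p4 := .inl (.inl i)
def ucol (j : Fin (p4 - 1)) : BCol p0 p1 p2 p3 p4 := .inl (.inr (.inl j))
def ycol (j : Fin (p1 - 1)) : BCol p0 p1 p2 p3 p4 := .inl (.inr (.inr j))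
def tcol (i : Fin p3) : BCol p0 p1 p2 p3 p4 := .inr (.inl i)
def zcol (j : Fin (p2 - 1)) : BCol p0 p1 p2 p3 p4 := .inr (.inr j)

lemma col_sum (g : Col → ℝ) :
    ∑ j : Col, g j = (∑ i, g (vcol i) + (∑ j, g (ucol j) + ∑ j, g (ycol j)))
      + (∑ i, g (tcol i) + ∑ j, g (zcol j)) := by
  simp only [Fintype.sum_sum_type]
  rfl

lemma rowsum_v (i : Fin p0) (w : Col → ℝ) :
    ∑ j : Col, (A (.inl i) j : ℝ) * w j = w (vcol i) := by
  rw [col_sum]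
  simp [batyrevA, vcol, ucol, ycol, tcol, zcol, Fin.val_eq_val, ite_mul, Finset.sum_ite_eq]


lemma rowsum_u0 (j : Fin p4) (hj : (j : ℕ) = 0) (w : Col → ℝ) :
    ∑ jc : Col, (A (.inr (.inl j)) jc : ℝ) * w jc
      = -(∑ i, w (vcol i)) - (∑ a, w (ucol a))
        + (∑ i, (b i : ℝ) * w (tcol i)) + (∑ k, (c k : ℝ) * w (zcol k)) := by
  rw [col_sum]
  simp [batyrevA, vcol, ucol, ycol, tcol, zcol, hj, Finset.sum_neg_distrib]
  ring

lemma rowsum_usucc (j : Fin p4) (m : Fin (p4 - 1)) (hj : (j : ℕ) = (m : ℕ) + 1)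
    (w : Col → ℝ) :
    ∑ jc : Col, (A (.inr (.inl j)) jc : ℝ) * w jc = w (ucol m) := by
  rw [col_sum]
  have : ((j : ℕ) = 0) = False := by simp [hj]
  simp [batyrevA, vcol, ucol, ycol, tcol, zcol, hj, this, Fin.val_eq_val, ite_mul,
    Finset.sum_ite_eq]

lemma rowsum_y0 (j : Fin p1) (hj : (j : ℕ) = 0) (w : Col → ℝ) :
    ∑ jc : Col, (A (.inr (.inr (.inl j))) jc : ℝ) * w jc
      = -(∑ i, w (vcol i)) - (∑ a, w (ycol a))
        + (∑ i, ((b i : ℝ) + 1) * w (tcol i)) + (∑ k, (c k : ℝ) * w (zcol k)) := by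
  rw [col_sum]
  simp [batyrevA, vcol, ucol, ycol, tcol, zcol, hj]
  ring

lemma rowsum_ysucc (j : Fin p1) (m : Fin (p1 - 1)) (hj : (j : ℕ) = (m : ℕ) + 1)
    (w : Col → ℝ) :
    ∑ jc : Col, (A (.inr (.inr (.inl j))) jc : ℝ) * w jc = w (ycol m) := by
  rw [col_sum]
  have : ((j : ℕ) = 0) = False := by simp [hj]
  simp [batyrevA, vcol, ucol, ycol, tcol, zcol, hj, this, Fin.val_eq_val, ite_mul,
    Finset.sum_ite_eq]

lemma rowsum_t (i : Fin p3) (w : Col → ℝ) :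
    ∑ jc : Col, (A (.inr (.inr (.inr (.inl i)))) jc : ℝ) * w jc = w (tcol i) := by
  rw [col_sum]
  simp [batyrevA, vcol, ucol, ycol, tcol, zcol, Fin.val_eq_val, ite_mul, Finset.sum_ite_eq]

lemma rowsum_z0 (j : Fin p2) (hj : (j : ℕ) = 0) (w : Col → ℝ) :
    ∑ jc : Col, (A (.inr (.inr (.inr (.inr j)))) jc : ℝ) * w jc
      = -(∑ i, w (tcol i)) - (∑ k, w (zcol k)) := by
  rw [col_sum]
  simp [batyrevA, vcol, ucol, ycol, tcol, zcol, hj]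
  ring

lemma rowsum_zsucc (j : Fin p2) (m : Fin (p2 - 1)) (hj : (j : ℕ) = (m : ℕ) + 1)
    (w : Col → ℝ) :
    ∑ jc : Col, (A (.inr (.inr (.inr (.inr j)))) jc : ℝ) * w jc = w (zcol m) := by
  rw [col_sum]
  have : ((j : ℕ) = 0) = False := by simp [hj]
  simp [batyrevA, vcol, ucol, ycol, tcol, zcol, hj, this, Fin.val_eq_val, ite_mul,
    Finset.sum_ite_eq]

end Rows
section Helpers

lemma fin_sum_single {n : ℕ} (m : Fin n) (a : ℝ) :
    ∑ i, Pi.single (M := fun _ => ℝ) m a i = a := by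
  classical
  rw [Finset.sum_pi_single']
  simp

lemma fin_sum_mul_single {n : ℕ} (w : Fin n → ℝ) (m : Fin n) (a : ℝ) :
    ∑ i, w i * Pi.single (M := fun _ => ℝ) m a i = w m * a := by
  classical
  rw [Finset.sum_eq_single m]
  · simp
  · intro i _ hi
    rw [Pi.single_eq_of_ne hi]
    simp
  · simp

lemma single_support {n : ℕ} {P : Fin n → Prop} {m : Fin n} {a : ℝ} (hm : P m) :
    ∀ i, Pi.single (M := fun _ => ℝ) m a i ≠ 0 → P i := by
  intro i hi
  rcases eq_or_ne i m with rfl | hne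
  · exact hm
  · rw [Pi.single_eq_of_ne hne] at hi
    simp at hi

lemma pair_support {n : ℕ} {P : Fin n → Prop} {m m' : Fin n} {a a' : ℝ}
    (hm : P m) (hm' : P m') :
    ∀ i, (Pi.single (M := fun _ => ℝ) m a + Pi.single (M := fun _ => ℝ) m' a') i ≠ 0 → P i := by
  intro i hi
  rcases eq_or_ne i m with rfl | hne
  · exact hm
  rcases eq_or_ne i m' with rfl | hne'
  · exact hm'
  · rw [Pi.add_apply, Pi.single_eq_of_ne hne, Pi.single_eq_of_ne hne'] at hi
    simp at hi

lemma zero_support {n : ℕ} {P : Fin n → Prop} :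
    ∀ i : Fin n, (0 : Fin n → ℝ) i ≠ 0 → P i := by
  intro i hi
  simp at hi

lemma fin_sum_pair {n : ℕ} (m m' : Fin n) (a a' : ℝ) :
    ∑ i, (Pi.single (M := fun _ => ℝ) m a + Pi.single (M := fun _ => ℝ) m' a') i = a + a' := by
  simp only [Pi.add_apply]
  rw [Finset.sum_add_distrib, fin_sum_single, fin_sum_single]

lemma sum_eq_single_plus {n : ℕ} (w l : Fin n → ℝ) (m : Fin n)
    (h : ∀ i, i ≠ m → w i = l i) : ∑ i, w i = w m - l m + ∑ i, l i := by
  classical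
  rw [← Finset.add_sum_erase _ w (Finset.mem_univ m), ← Finset.add_sum_erase _ l (Finset.mem_univ m)]
  rw [Finset.sum_congr rfl (fun i hi => h i (Finset.ne_of_mem_erase hi))]
  ring

lemma sum_nonneg_eq_zero {n : ℕ} {w : Fin n → ℝ} (h0 : ∀ i, 0 ≤ w i)
    (hsum : ∑ i, w i ≤ 0) : ∀ i, w i = 0 := by
  intro i
  have hge : (0:ℝ) ≤ ∑ i, w i := Finset.sum_nonneg (fun i _ => h0 i)
  have hz : ∑ i, w i = 0 := le_antisymm hsum hge
  have := (Finset.sum_eq_zero_iff_of_nonneg (fun i _ => h0 i)).1 hz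
  exact this i (Finset.mem_univ i)

end Helpers

section SBlock
variable {nv nu ny : ℕ}

/-- Integrality of the v/u/y block, given integrality of the right-hand sides. -/
lemma sblock (lb : Fin nv → ℤ)
    (xv : Fin nv → ℝ) (xu : Fin nu → ℝ) (xy : Fin ny → ℝ)
    (RA RB : ℝ) (kA kB : ℤ) (hRA : RA = (kA : ℝ)) (hRB : RB = (kB : ℝ))
    (hv : ∀ i, (lb i : ℝ) ≤ xv i) (hu : ∀ a, 0 ≤ xu a) (hy : ∀ a, 0 ≤ xy a)
    (hA : (∑ i, xv i) + (∑ a, xu a) ≤ RA)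
    (hB : (∑ i, xv i) + (∑ a, xy a) ≤ RB)
    (TOOLS : ∀ (gv : Fin nv → ℝ) (gu : Fin nu → ℝ) (gy : Fin ny → ℝ),
      (∀ i, gv i ≠ 0 → (lb i : ℝ) < xv i) → (∀ a, gu a ≠ 0 → 0 < xu a) →
      (∀ a, gy a ≠ 0 → 0 < xy a) →
      ((∑ i, gv i) + (∑ a, gu a) = 0 ∨ (∑ i, xv i) + (∑ a, xu a) < RA) →
      ((∑ i, gv i) + (∑ a, gy a) = 0 ∨ (∑ i, xv i) + (∑ a, xy a) < RB) →
      (gv = 0 ∧ gu = 0 ∧ gy = 0)) :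
    (∀ i, ∃ k : ℤ, xv i = (k : ℝ)) ∧ (∀ a, ∃ k : ℤ, xu a = (k : ℝ)) ∧
      (∀ a, ∃ k : ℤ, xy a = (k : ℝ)) := by
  classical
  set L : ℤ := ∑ i, lb i with hL
  have hLr : (L : ℝ) = ∑ i, (lb i : ℝ) := by rw [hL]; push_cast; rfl
  -- tightness facts
  have fU : (∃ a, 0 < xu a) → (∑ i, xv i) + (∑ a, xu a) = RA := by
    rintro ⟨a, ha⟩
    by_contra hne
    have hlt := lt_of_le_of_ne hA hne
    have := TOOLS 0 (Pi.single a 1) 0 (zero_support) (single_support ha) (zero_support)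
      (Or.inr hlt) (Or.inl (by simp [fin_sum_single]))
    have := congrFun this.2.1 a
    simp [Pi.single_eq_same] at this
  have fY : (∃ a, 0 < xy a) → (∑ i, xv i) + (∑ a, xy a) = RB := by
    rintro ⟨a, ha⟩
    by_contra hne
    have hlt := lt_of_le_of_ne hB hne
    have := TOOLS 0 0 (Pi.single a 1) (zero_support) (zero_support) (single_support ha)
      (Or.inl (by simp)) (Or.inr hlt)
    have := congrFun this.2.2 a
    simp [Pi.single_eq_same] at this
  have fVU : (∃ m, (lb m : ℝ) < xv m) → (∃ a, 0 < xu a) →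
      (∑ i, xv i) + (∑ a, xy a) = RB := by
    rintro ⟨m, hm⟩ ⟨a, ha⟩
    by_contra hne
    have hlt := lt_of_le_of_ne hB hne
    have := TOOLS (Pi.single m 1) (Pi.single a (-1)) 0 (single_support hm)
      (single_support ha) (zero_support)
      (Or.inl (by simp [fin_sum_single])) (Or.inr hlt)
    have := congrFun this.1 m
    simp [Pi.single_eq_same] at this
  have fVY : (∃ m, (lb m : ℝ) < xv m) → (∃ a, 0 < xy a) →
      (∑ i, xv i) + (∑ a, xu a) = RA := by
    rintro ⟨m, hm⟩ ⟨a, ha⟩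
    by_contra hne
    have hlt := lt_of_le_of_ne hA hne
    have := TOOLS (Pi.single m 1) 0 (Pi.single a (-1)) (single_support hm)
      (zero_support) (single_support ha)
      (Or.inr hlt) (Or.inl (by simp [fin_sum_single]))
    have := congrFun this.1 m
    simp [Pi.single_eq_same] at this
  have fV : (∃ m, (lb m : ℝ) < xv m) →
      ((∑ i, xv i) + (∑ a, xu a) = RA ∨ (∑ i, xv i) + (∑ a, xy a) = RB) := by
    rintro ⟨m, hm⟩
    by_contra hne
    push_neg at hne
    have hltA := lt_of_le_of_ne hA hne.1
    have hltB := lt_of_le_of_ne hB hne.2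
    have := TOOLS (Pi.single m 1) 0 0 (single_support hm) (zero_support) (zero_support)
      (Or.inr hltA) (Or.inr hltB)
    have := congrFun this.1 m
    simp [Pi.single_eq_same] at this
  have fAll : (∃ m, (lb m : ℝ) < xv m) → (∃ a, 0 < xu a) → (∃ a, 0 < xy a) → False := by
    rintro ⟨m, hm⟩ ⟨a, ha⟩ ⟨a', ha'⟩
    have := TOOLS (Pi.single m 1) (Pi.single a (-1)) (Pi.single a' (-1)) (single_support hm)
      (single_support ha) (single_support ha')
      (Or.inl (by simp [fin_sum_single])) (Or.inl (by simp [fin_sum_single]))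
    have := congrFun this.1 m
    simp [Pi.single_eq_same] at this
  -- uniqueness facts
  have uniqV : ∀ m, (lb m : ℝ) < xv m → ∀ i, i ≠ m → xv i = (lb i : ℝ) := by
    intro m hm i hi
    by_contra hne
    have hilt : (lb i : ℝ) < xv i := lt_of_le_of_ne (hv i) (Ne.symm hne)
    have := TOOLS (Pi.single m 1 + Pi.single i (-1)) 0 0 (pair_support hm hilt)
      (zero_support) (zero_support)
      (Or.inl (by rw [fin_sum_pair]; simp))
      (Or.inl (by rw [fin_sum_pair]; simp))
    have := congrFun this.1 m
    rw [Pi.add_apply, Pi.single_eq_same, Pi.single_eq_of_ne (Ne.symm hi)] at this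
    simp at this
  have uniqU : ∀ m, 0 < xu m → ∀ a, a ≠ m → xu a = 0 := by
    intro m hm a hi
    by_contra hne
    have hilt : 0 < xu a := lt_of_le_of_ne (hu a) (Ne.symm hne)
    have := TOOLS 0 (Pi.single m 1 + Pi.single a (-1)) 0 (zero_support)
      (pair_support hm hilt) (zero_support)
      (Or.inl (by rw [fin_sum_pair]; simp))
      (Or.inl (by simp))
    have := congrFun this.2.1 m
    rw [Pi.add_apply, Pi.single_eq_same, Pi.single_eq_of_ne (Ne.symm hi)] at this
    simp at this
  have uniqY : ∀ m, 0 < xy m → ∀ a, a ≠ m → xy a = 0 := by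
    intro m hm a hi
    by_contra hne
    have hilt : 0 < xy a := lt_of_le_of_ne (hy a) (Ne.symm hne)
    have := TOOLS 0 0 (Pi.single m 1 + Pi.single a (-1)) (zero_support)
      (zero_support) (pair_support hm hilt)
      (Or.inl (by simp))
      (Or.inl (by rw [fin_sum_pair]; simp))
    have := congrFun this.2.2 m
    rw [Pi.add_apply, Pi.single_eq_same, Pi.single_eq_of_ne (Ne.symm hi)] at this
    simp at this
  by_cases hV : ∃ m, (lb m : ℝ) < xv m
  · obtain ⟨m, hm⟩ := hV
    have hVeq : ∀ i, i ≠ m → xv i = (lb i : ℝ) := uniqV m hm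
    have hSV : ∑ i, xv i = xv m - (lb m : ℝ) + (L : ℝ) := by
      rw [hLr]; exact sum_eq_single_plus xv (fun i => (lb i : ℝ)) m hVeq
    have hvint : ∀ r : ℝ, (∃ k : ℤ, r = k) → xv m = r - (L : ℝ) + (lb m : ℝ) →
        ∀ i, ∃ k : ℤ, xv i = (k : ℝ) := by
      rintro r ⟨k, rfl⟩ hxvm i
      rcases eq_or_ne i m with rfl | hi
      · exact ⟨k - L + lb i, by rw [hxvm]; push_cast; ring⟩
      · exact ⟨lb i, hVeq i hi⟩
    by_cases hU : ∃ a, 0 < xu a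
    · -- V and U available
      by_cases hY : ∃ a, 0 < xy a
      · exact absurd (fAll ⟨m, hm⟩ hU hY) (fun h => h)
      · -- V, U, no Y
        have hYeq : ∀ a, xy a = 0 := by
          intro a
          by_contra hne
          exact hY ⟨a, lt_of_le_of_ne (hy a) (Ne.symm hne)⟩
        have hSY : ∑ a, xy a = 0 := Finset.sum_eq_zero (fun a _ => hYeq a)
        have htB := fVU ⟨m, hm⟩ hU
        have htA := fU hU
        -- SV = RB, so xv m = kB - L + lb m
        have hxvm : xv m = (kB : ℝ) - (L : ℝ) + (lb m : ℝ) := by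
          rw [hSY, add_zero, hRB] at htB
          rw [hSV] at htB
          linarith
        obtain ⟨a, ha⟩ := hU
        have hUeq : ∀ a', a' ≠ a → xu a' = 0 := uniqU a ha
        have hSU : ∑ a', xu a' = xu a - 0 + ∑ (_a : Fin nu), (0:ℝ) := by
          exact sum_eq_single_plus xu (fun _ => 0) a hUeq
        have hxua : xu a = (kA : ℝ) - (kB : ℝ) := by
          rw [hSU] at htA
          rw [hRA] at htA
          have hSVval : ∑ i, xv i = (kB : ℝ) := by
            rw [hSV, hxvm]; ring
          rw [hSVval] at htA
          simp at htA
          linarith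
        refine ⟨hvint (kB : ℝ) ⟨kB, rfl⟩ hxvm, ?_, fun a' => ⟨0, by rw [hYeq a']; simp⟩⟩
        intro a'
        rcases eq_or_ne a' a with rfl | hne
        · exact ⟨kA - kB, by rw [hxua]; push_cast; ring⟩
        · exact ⟨0, by rw [hUeq a' hne]; simp⟩
    · have hUeq : ∀ a, xu a = 0 := by
        intro a
        by_contra hne
        exact hU ⟨a, lt_of_le_of_ne (hu a) (Ne.symm hne)⟩
      have hSU : ∑ a, xu a = 0 := Finset.sum_eq_zero (fun a _ => hUeq a)
      by_cases hY : ∃ a, 0 < xy a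
      · -- V, Y, no U
        have htA := fVY ⟨m, hm⟩ hY
        have htB := fY hY
        have hxvm : xv m = (kA : ℝ) - (L : ℝ) + (lb m : ℝ) := by
          rw [hSU, add_zero, hRA, hSV] at htA
          linarith
        obtain ⟨a, ha⟩ := hY
        have hYeq : ∀ a', a' ≠ a → xy a' = 0 := uniqY a ha
        have hSY : ∑ a', xy a' = xy a - 0 + ∑ (_a : Fin ny), (0:ℝ) :=
          sum_eq_single_plus xy (fun _ => 0) a hYeq
        have hxya : xy a = (kB : ℝ) - (kA : ℝ) := by
          rw [hSY] at htB
          rw [hRB] at htB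
          have hSVval : ∑ i, xv i = (kA : ℝ) := by rw [hSV, hxvm]; ring
          rw [hSVval] at htB
          simp at htB
          linarith
        refine ⟨hvint (kA : ℝ) ⟨kA, rfl⟩ hxvm, fun a' => ⟨0, by rw [hUeq a']; simp⟩, ?_⟩
        intro a'
        rcases eq_or_ne a' a with rfl | hne
        · exact ⟨kB - kA, by rw [hxya]; push_cast; ring⟩
        · exact ⟨0, by rw [hYeq a' hne]; simp⟩
      · -- V only
        have hYeq : ∀ a, xy a = 0 := by
          intro a
          by_contra hne
          exact hY ⟨a, lt_of_le_of_ne (hy a) (Ne.symm hne)⟩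
        have hSY : ∑ a, xy a = 0 := Finset.sum_eq_zero (fun a _ => hYeq a)
        rcases fV ⟨m, hm⟩ with htA | htB
        · have hxvm : xv m = (kA : ℝ) - (L : ℝ) + (lb m : ℝ) := by
            rw [hSU, add_zero, hRA, hSV] at htA
            linarith
          exact ⟨hvint (kA : ℝ) ⟨kA, rfl⟩ hxvm, fun a' => ⟨0, by rw [hUeq a']; simp⟩,
            fun a' => ⟨0, by rw [hYeq a']; simp⟩⟩
        · have hxvm : xv m = (kB : ℝ) - (L : ℝ) + (lb m : ℝ) := by
            rw [hSY, add_zero, hRB, hSV] at htB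
            linarith
          exact ⟨hvint (kB : ℝ) ⟨kB, rfl⟩ hxvm, fun a' => ⟨0, by rw [hUeq a']; simp⟩,
            fun a' => ⟨0, by rw [hYeq a']; simp⟩⟩
  · -- no V available
    have hVeq : ∀ i, xv i = (lb i : ℝ) := by
      intro i
      by_contra hne
      exact hV ⟨i, lt_of_le_of_ne (hv i) (Ne.symm hne)⟩
    have hSV : ∑ i, xv i = (L : ℝ) := by
      rw [hLr]; exact Finset.sum_congr rfl (fun i _ => hVeq i)
    have hvout : ∀ i, ∃ k : ℤ, xv i = (k : ℝ) := fun i => ⟨lb i, hVeq i⟩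
    by_cases hU : ∃ a, 0 < xu a
    · obtain ⟨a, ha⟩ := hU
      have htA := fU ⟨a, ha⟩
      have hUeq : ∀ a', a' ≠ a → xu a' = 0 := uniqU a ha
      have hSU : ∑ a', xu a' = xu a - 0 + ∑ (_a : Fin nu), (0:ℝ) :=
        sum_eq_single_plus xu (fun _ => 0) a hUeq
      have hxua : xu a = (kA : ℝ) - (L : ℝ) := by
        rw [hSU, hSV, hRA] at htA
        simp at htA
        linarith
      have huout : ∀ a', ∃ k : ℤ, xu a' = (k : ℝ) := by
        intro a'
        rcases eq_or_ne a' a with rfl | hne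
        · exact ⟨kA - L, by rw [hxua]; push_cast; ring⟩
        · exact ⟨0, by rw [hUeq a' hne]; simp⟩
      by_cases hY : ∃ a, 0 < xy a
      · obtain ⟨a', ha'⟩ := hY
        have htB := fY ⟨a', ha'⟩
        have hYeq : ∀ a'', a'' ≠ a' → xy a'' = 0 := uniqY a' ha'
        have hSY : ∑ a'', xy a'' = xy a' - 0 + ∑ (_a : Fin ny), (0:ℝ) :=
          sum_eq_single_plus xy (fun _ => 0) a' hYeq
        have hxya : xy a' = (kB : ℝ) - (L : ℝ) := by
          rw [hSY, hSV, hRB] at htB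
          simp at htB
          linarith
        refine ⟨hvout, huout, ?_⟩
        intro a''
        rcases eq_or_ne a'' a' with rfl | hne
        · exact ⟨kB - L, by rw [hxya]; push_cast; ring⟩
        · exact ⟨0, by rw [hYeq a'' hne]; simp⟩
      · have hYeq : ∀ a', xy a' = 0 := by
          intro a'
          by_contra hne
          exact hY ⟨a', lt_of_le_of_ne (hy a') (Ne.symm hne)⟩
        exact ⟨hvout, huout, fun a' => ⟨0, by rw [hYeq a']; simp⟩⟩
    · have hUeq : ∀ a, xu a = 0 := by
        intro a
        by_contra hne
        exact hU ⟨a, lt_of_le_of_ne (hu a) (Ne.symm hne)⟩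
      have huout : ∀ a', ∃ k : ℤ, xu a' = (k : ℝ) := fun a' => ⟨0, by rw [hUeq a']; simp⟩
      by_cases hY : ∃ a, 0 < xy a
      · obtain ⟨a', ha'⟩ := hY
        have htB := fY ⟨a', ha'⟩
        have hYeq : ∀ a'', a'' ≠ a' → xy a'' = 0 := uniqY a' ha'
        have hSY : ∑ a'', xy a'' = xy a' - 0 + ∑ (_a : Fin ny), (0:ℝ) :=
          sum_eq_single_plus xy (fun _ => 0) a' hYeq
        have hxya : xy a' = (kB : ℝ) - (L : ℝ) := by
          rw [hSY, hSV, hRB] at htB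
          simp at htB
          linarith
        refine ⟨hvout, huout, ?_⟩
        intro a''
        rcases eq_or_ne a'' a' with rfl | hne
        · exact ⟨kB - L, by rw [hxya]; push_cast; ring⟩
        · exact ⟨0, by rw [hYeq a'' hne]; simp⟩
      · have hYeq : ∀ a', xy a' = 0 := by
          intro a'
          by_contra hne
          exact hY ⟨a', lt_of_le_of_ne (hy a') (Ne.symm hne)⟩
        exact ⟨hvout, huout, fun a' => ⟨0, by rw [hYeq a']; simp⟩⟩

end SBlock

section KeyTZ
variable {nv nu ny nt nz : ℕ}

lemma all_zero_of_not_pos {n : ℕ} {w : Fin n → ℝ} (h0 : ∀ a, 0 ≤ w a)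
    (h : ¬ ∃ a, 0 < w a) : ∀ a, w a = 0 := by
  intro a
  by_contra hne
  exact h ⟨a, lt_of_le_of_ne (h0 a) (Ne.symm hne)⟩

lemma all_lb_of_not_pos {n : ℕ} {lb : Fin n → ℤ} {w : Fin n → ℝ} (h0 : ∀ a, (lb a : ℝ) ≤ w a)
    (h : ¬ ∃ a, (lb a : ℝ) < w a) : ∀ a, w a = (lb a : ℝ) := by
  intro a
  by_contra hne
  exact h ⟨a, lt_of_le_of_ne (h0 a) (Ne.symm hne)⟩

lemma wsum_single {n : ℕ} (w xt : Fin n → ℝ) (i : Fin n) (h : ∀ i', i' ≠ i → xt i' = 0) :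
    ∑ i', w i' * xt i' = w i * xt i := by
  classical
  rw [Finset.sum_eq_single i]
  · intro i' _ hne
    rw [h i' hne, mul_zero]
  · simp

lemma sum_single_of_zeros {n : ℕ} (xt : Fin n → ℝ) (i : Fin n)
    (h : ∀ i', i' ≠ i → xt i' = 0) : ∑ i', xt i' = xt i := by
  classical
  rw [Finset.sum_eq_single i]
  · intro i' _ hne
    exact h i' hne
  · simp

lemma fin_sum_mul_pair {n : ℕ} (w : Fin n → ℝ) {m m' : Fin n} (hmm : m ≠ m') (a a' : ℝ) :
    ∑ i, w i * (Pi.single (M := fun _ => ℝ) m a + Pi.single (M := fun _ => ℝ) m' a') i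
      = w m * a + w m' * a' := by
  simp only [Pi.add_apply, mul_add]
  rw [Finset.sum_add_distrib, fin_sum_mul_single, fin_sum_mul_single]

lemma keyTZ (lb : Fin nv → ℤ) (hlb : ∀ i, lb i ≤ 0)
    (b : Fin nt → ℤ) (hb : ∀ i, 0 ≤ b i) (c : Fin nz → ℤ) (hc : ∀ k, 0 ≤ c k)
    (f EF : ℤ) (hf : 0 ≤ f)
    (xv : Fin nv → ℝ) (xu : Fin nu → ℝ) (xy : Fin ny → ℝ) (xt : Fin nt → ℝ) (xz : Fin nz → ℝ)
    (hv : ∀ i, (lb i : ℝ) ≤ xv i) (hu : ∀ a, 0 ≤ xu a) (hy : ∀ a, 0 ≤ xy a)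
    (ht : ∀ i, 0 ≤ xt i) (hz : ∀ k, 0 ≤ xz k)
    (hA : (∑ i, xv i) + (∑ a, xu a)
        ≤ (f : ℝ) + (∑ i, (b i : ℝ) * xt i) + (∑ k, (c k : ℝ) * xz k))
    (hB : (∑ i, xv i) + (∑ a, xy a)
        ≤ (∑ i, ((b i : ℝ) + 1) * xt i) + (∑ k, (c k : ℝ) * xz k))
    (hC : (∑ i, xt i) + (∑ k, xz k) ≤ (EF : ℝ))
    (TOOL : ∀ (gv : Fin nv → ℝ) (gu : Fin nu → ℝ) (gy : Fin ny → ℝ)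
        (gt : Fin nt → ℝ) (gz : Fin nz → ℝ),
      (∀ i, gv i ≠ 0 → (lb i : ℝ) < xv i) → (∀ a, gu a ≠ 0 → 0 < xu a) →
      (∀ a, gy a ≠ 0 → 0 < xy a) → (∀ i, gt i ≠ 0 → 0 < xt i) → (∀ k, gz k ≠ 0 → 0 < xz k) →
      ((∑ i, gv i) + (∑ a, gu a) - (∑ i, (b i : ℝ) * gt i) - (∑ k, (c k : ℝ) * gz k) = 0 ∨
        (∑ i, xv i) + (∑ a, xu a)
          < (f : ℝ) + (∑ i, (b i : ℝ) * xt i) + (∑ k, (c k : ℝ) * xz k)) →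
      ((∑ i, gv i) + (∑ a, gy a) - (∑ i, ((b i : ℝ) + 1) * gt i) - (∑ k, (c k : ℝ) * gz k) = 0 ∨
        (∑ i, xv i) + (∑ a, xy a)
          < (∑ i, ((b i : ℝ) + 1) * xt i) + (∑ k, (c k : ℝ) * xz k)) →
      ((∑ i, gt i) + (∑ k, gz k) = 0 ∨ (∑ i, xt i) + (∑ k, xz k) < (EF : ℝ)) →
      gv = 0 ∧ gu = 0 ∧ gy = 0 ∧ gt = 0 ∧ gz = 0) :
    (∀ i, ∃ k : ℤ, xt i = (k : ℝ)) ∧ (∀ k', ∃ m : ℤ, xz k' = (m : ℝ)) := by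
  classical
  -- fact G2
  have G2 : (∑ i, xv i) + (∑ a, xu a)
        = (f : ℝ) + (∑ i, (b i : ℝ) * xt i) + (∑ k, (c k : ℝ) * xz k) →
      (∀ i, xv i = (lb i : ℝ)) → (∀ a, xu a = 0) →
      ((f : ℝ) = 0 ∧ (∀ i, (b i : ℝ) * xt i = 0) ∧ (∀ k, (c k : ℝ) * xz k = 0)) := by
    intro htA hVeq hUeq
    have hSV : ∑ i, xv i ≤ 0 := by
      rw [Finset.sum_congr rfl (fun i _ => hVeq i)]
      apply Finset.sum_nonpos
      intro i _
      exact_mod_cast hlb i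
    have hSU : ∑ a, xu a = 0 := Finset.sum_eq_zero (fun a _ => hUeq a)
    have h1 : 0 ≤ ∑ i, (b i : ℝ) * xt i :=
      Finset.sum_nonneg fun i _ => mul_nonneg (by exact_mod_cast hb i) (ht i)
    have h2 : 0 ≤ ∑ k, (c k : ℝ) * xz k :=
      Finset.sum_nonneg fun k _ => mul_nonneg (by exact_mod_cast hc k) (hz k)
    have hf' : (0 : ℝ) ≤ (f : ℝ) := by exact_mod_cast hf
    have hfz : (f : ℝ) = 0 := by linarith
    have hs1 : ∑ i, (b i : ℝ) * xt i ≤ 0 := by linarith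
    have hs2 : ∑ k, (c k : ℝ) * xz k ≤ 0 := by linarith
    exact ⟨hfz,
      sum_nonneg_eq_zero (fun i => mul_nonneg (by exact_mod_cast hb i) (ht i)) hs1,
      sum_nonneg_eq_zero (fun k => mul_nonneg (by exact_mod_cast hc k) (hz k)) hs2⟩
  -- fact G3
  have G3 : (∑ i, xv i) + (∑ a, xy a)
        = (∑ i, ((b i : ℝ) + 1) * xt i) + (∑ k, (c k : ℝ) * xz k) →
      (∀ i, xv i = (lb i : ℝ)) → (∀ a, xy a = 0) →
      ((∀ i, xt i = 0) ∧ (∀ k, (c k : ℝ) * xz k = 0)) := by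
    intro htB hVeq hYeq
    have hSV : ∑ i, xv i ≤ 0 := by
      rw [Finset.sum_congr rfl (fun i _ => hVeq i)]
      apply Finset.sum_nonpos
      intro i _
      exact_mod_cast hlb i
    have hSY : ∑ a, xy a = 0 := Finset.sum_eq_zero (fun a _ => hYeq a)
    have h1 : 0 ≤ ∑ i, ((b i : ℝ) + 1) * xt i :=
      Finset.sum_nonneg fun i _ => mul_nonneg
        (by have := hb i; positivity) (ht i)
    have h2 : 0 ≤ ∑ k, (c k : ℝ) * xz k :=
      Finset.sum_nonneg fun k _ => mul_nonneg (by exact_mod_cast hc k) (hz k)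
    have hs1 : ∑ i, ((b i : ℝ) + 1) * xt i ≤ 0 := by linarith
    have hs2 : ∑ k, (c k : ℝ) * xz k ≤ 0 := by linarith
    have ht0 : ∀ i, ((b i : ℝ) + 1) * xt i = 0 := by
      apply sum_nonneg_eq_zero _ hs1
      intro i
      have hbi : (0:ℝ) ≤ (b i : ℝ) := by exact_mod_cast hb i
      exact mul_nonneg (by linarith) (ht i)
    refine ⟨fun i => ?_, sum_nonneg_eq_zero
      (fun k => mul_nonneg (by exact_mod_cast hc k) (hz k)) hs2⟩
    have := ht0 i
    have hbi : (0:ℝ) < (b i : ℝ) + 1 := by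
      have : (0:ℝ) ≤ (b i : ℝ) := by exact_mod_cast hb i
      linarith
    rcases mul_eq_zero.1 (ht0 i) with h | h
    · exact absurd h (ne_of_gt hbi)
    · exact h
  -- S2 : no two positive t-coordinates
  have S2 : ∀ i k, i ≠ k → 0 < xt i → 0 < xt k → False := by
    intro i k hik hti htk
    set gt0 : Fin nt → ℝ := Pi.single i 1 + Pi.single k (-1) with hgt0
    have hgtne : gt0 ≠ 0 := by
      intro h0
      have := congrFun h0 i
      rw [hgt0, Pi.add_apply, Pi.single_eq_same, Pi.single_eq_of_ne hik] at this
      simp at this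
    have hsupT : ∀ i', gt0 i' ≠ 0 → 0 < xt i' := pair_support hti htk
    have hCgt : (∑ i', gt0 i') + (∑ k', (0 : Fin nz → ℝ) k') = 0 := by
      rw [hgt0, fin_sum_pair]; simp
    have hsumb : ∑ i', (b i' : ℝ) * gt0 i' = (b i : ℝ) - (b k : ℝ) := by
      rw [hgt0, fin_sum_mul_pair _ hik]; ring
    have hsumb1 : ∑ i', ((b i' : ℝ) + 1) * gt0 i' = (b i : ℝ) - (b k : ℝ) := by
      rw [hgt0, fin_sum_mul_pair _ hik]; ring
    -- case : b i = b k
    by_cases hbb : (b i : ℝ) = (b k : ℝ)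
    · have := TOOL 0 0 0 gt0 0 zero_support zero_support zero_support hsupT zero_support
        (Or.inl (by simp [hsumb, hbb])) (Or.inl (by simp [hsumb1, hbb])) (Or.inl hCgt)
      exact hgtne this.2.2.2.1
    -- now b i ≠ b k ; first : no v available
    have hnoV : ¬ ∃ m, (lb m : ℝ) < xv m := by
      rintro ⟨m, hm⟩
      have := TOOL (Pi.single m ((b i : ℝ) - (b k : ℝ))) 0 0 gt0 0
        (single_support hm) zero_support zero_support hsupT zero_support
        (Or.inl (by simp [hsumb, fin_sum_single])) (Or.inl (by simp [hsumb1, fin_sum_single]))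
        (Or.inl hCgt)
      exact hgtne this.2.2.2.1
    have hVeq : ∀ m, xv m = (lb m : ℝ) := all_lb_of_not_pos hv hnoV
    by_cases hU : ∃ a, 0 < xu a
    · obtain ⟨a, ha⟩ := hU
      by_cases hY : ∃ a', 0 < xy a'
      · obtain ⟨a', ha'⟩ := hY
        have := TOOL 0 (Pi.single a ((b i : ℝ) - (b k : ℝ)))
          (Pi.single a' ((b i : ℝ) - (b k : ℝ))) gt0 0
          zero_support (single_support ha) (single_support ha') hsupT zero_support
          (Or.inl (by simp [hsumb, fin_sum_single])) (Or.inl (by simp [hsumb1, fin_sum_single]))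
          (Or.inl hCgt)
        exact hgtne this.2.2.2.1
      · have hYeq : ∀ a', xy a' = 0 := all_zero_of_not_pos hy hY
        by_cases htB : (∑ m, xv m) + (∑ a', xy a')
            = (∑ i', ((b i' : ℝ) + 1) * xt i') + (∑ k', (c k' : ℝ) * xz k')
        · exact absurd (((G3 htB hVeq hYeq).1) i) (ne_of_gt hti)
        · have hlt := lt_of_le_of_ne hB htB
          have := TOOL 0 (Pi.single a ((b i : ℝ) - (b k : ℝ))) 0 gt0 0
            zero_support (single_support ha) zero_support hsupT zero_support
            (Or.inl (by simp [hsumb, fin_sum_single])) (Or.inr hlt) (Or.inl hCgt)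
          exact hgtne this.2.2.2.1
    · have hUeq : ∀ a, xu a = 0 := all_zero_of_not_pos hu hU
      by_cases htA : (∑ m, xv m) + (∑ a, xu a)
          = (f : ℝ) + (∑ i', (b i' : ℝ) * xt i') + (∑ k', (c k' : ℝ) * xz k')
      · obtain ⟨-, hbt, -⟩ := G2 htA hVeq hUeq
        have hbi : (b i : ℝ) = 0 := by
          rcases mul_eq_zero.1 (hbt i) with h | h
          · exact h
          · exact absurd h (ne_of_gt hti)
        have hbk : (b k : ℝ) = 0 := by
          rcases mul_eq_zero.1 (hbt k) with h | h
          · exact h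
          · exact absurd h (ne_of_gt htk)
        exact hbb (by rw [hbi, hbk])
      · have hltA := lt_of_le_of_ne hA htA
        by_cases hY : ∃ a', 0 < xy a'
        · obtain ⟨a', ha'⟩ := hY
          have := TOOL 0 0 (Pi.single a' ((b i : ℝ) - (b k : ℝ))) gt0 0
            zero_support zero_support (single_support ha') hsupT zero_support
            (Or.inr hltA) (Or.inl (by simp [hsumb1, fin_sum_single])) (Or.inl hCgt)
          exact hgtne this.2.2.2.1
        · have hYeq : ∀ a', xy a' = 0 := all_zero_of_not_pos hy hY
          by_cases htB : (∑ m, xv m) + (∑ a', xy a')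
              = (∑ i', ((b i' : ℝ) + 1) * xt i') + (∑ k', (c k' : ℝ) * xz k')
          · exact absurd (((G3 htB hVeq hYeq).1) i) (ne_of_gt hti)
          · have hltB := lt_of_le_of_ne hB htB
            have := TOOL 0 0 0 gt0 0
              zero_support zero_support zero_support hsupT zero_support
              (Or.inr hltA) (Or.inr hltB) (Or.inl hCgt)
            exact hgtne this.2.2.2.1
  -- S3 : no two positive z-coordinates
  have S3 : ∀ j l, j ≠ l → 0 < xz j → 0 < xz l → False := by
    intro j l hjl hzj hzl
    set gz0 : Fin nz → ℝ := Pi.single j 1 + Pi.single l (-1) with hgz0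
    have hgzne : gz0 ≠ 0 := by
      intro h0
      have := congrFun h0 j
      rw [hgz0, Pi.add_apply, Pi.single_eq_same, Pi.single_eq_of_ne hjl] at this
      simp at this
    have hsupZ : ∀ k', gz0 k' ≠ 0 → 0 < xz k' := pair_support hzj hzl
    have hCgz : (∑ i', (0 : Fin nt → ℝ) i') + (∑ k', gz0 k') = 0 := by
      rw [hgz0, fin_sum_pair]; simp
    have hsumc : ∑ k', (c k' : ℝ) * gz0 k' = (c j : ℝ) - (c l : ℝ) := by
      rw [hgz0, fin_sum_mul_pair _ hjl]; ring
    by_cases hcc : (c j : ℝ) = (c l : ℝ)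
    · have := TOOL 0 0 0 0 gz0 zero_support zero_support zero_support zero_support hsupZ
        (Or.inl (by simp [hsumc, hcc])) (Or.inl (by simp [hsumc, hcc])) (Or.inl hCgz)
      exact hgzne this.2.2.2.2
    have hnoV : ¬ ∃ m, (lb m : ℝ) < xv m := by
      rintro ⟨m, hm⟩
      have := TOOL (Pi.single m ((c j : ℝ) - (c l : ℝ))) 0 0 0 gz0
        (single_support hm) zero_support zero_support zero_support hsupZ
        (Or.inl (by simp [hsumc, fin_sum_single])) (Or.inl (by simp [hsumc, fin_sum_single]))
        (Or.inl hCgz)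
      exact hgzne this.2.2.2.2
    have hVeq : ∀ m, xv m = (lb m : ℝ) := all_lb_of_not_pos hv hnoV
    by_cases hU : ∃ a, 0 < xu a
    · obtain ⟨a, ha⟩ := hU
      by_cases hY : ∃ a', 0 < xy a'
      · obtain ⟨a', ha'⟩ := hY
        have := TOOL 0 (Pi.single a ((c j : ℝ) - (c l : ℝ)))
          (Pi.single a' ((c j : ℝ) - (c l : ℝ))) 0 gz0
          zero_support (single_support ha) (single_support ha') zero_support hsupZ
          (Or.inl (by simp [hsumc, fin_sum_single])) (Or.inl (by simp [hsumc, fin_sum_single]))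
          (Or.inl hCgz)
        exact hgzne this.2.2.2.2
      · have hYeq : ∀ a', xy a' = 0 := all_zero_of_not_pos hy hY
        by_cases htB : (∑ m, xv m) + (∑ a', xy a')
            = (∑ i', ((b i' : ℝ) + 1) * xt i') + (∑ k', (c k' : ℝ) * xz k')
        · obtain ⟨-, hcz⟩ := G3 htB hVeq hYeq
          have hcj : (c j : ℝ) = 0 := by
            rcases mul_eq_zero.1 (hcz j) with h | h
            · exact h
            · exact absurd h (ne_of_gt hzj)
          have hcl : (c l : ℝ) = 0 := by
            rcases mul_eq_zero.1 (hcz l) with h | h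
            · exact h
            · exact absurd h (ne_of_gt hzl)
          exact hcc (by rw [hcj, hcl])
        · have hltB := lt_of_le_of_ne hB htB
          have := TOOL 0 (Pi.single a ((c j : ℝ) - (c l : ℝ))) 0 0 gz0
            zero_support (single_support ha) zero_support zero_support hsupZ
            (Or.inl (by simp [hsumc, fin_sum_single])) (Or.inr hltB) (Or.inl hCgz)
          exact hgzne this.2.2.2.2
    · have hUeq : ∀ a, xu a = 0 := all_zero_of_not_pos hu hU
      by_cases htA : (∑ m, xv m) + (∑ a, xu a)
          = (f : ℝ) + (∑ i', (b i' : ℝ) * xt i') + (∑ k', (c k' : ℝ) * xz k')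
      · obtain ⟨-, -, hcz⟩ := G2 htA hVeq hUeq
        have hcj : (c j : ℝ) = 0 := by
          rcases mul_eq_zero.1 (hcz j) with h | h
          · exact h
          · exact absurd h (ne_of_gt hzj)
        have hcl : (c l : ℝ) = 0 := by
          rcases mul_eq_zero.1 (hcz l) with h | h
          · exact h
          · exact absurd h (ne_of_gt hzl)
        exact hcc (by rw [hcj, hcl])
      · have hltA := lt_of_le_of_ne hA htA
        by_cases hY : ∃ a', 0 < xy a'
        · obtain ⟨a', ha'⟩ := hY
          have := TOOL 0 0 (Pi.single a' ((c j : ℝ) - (c l : ℝ))) 0 gz0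
            zero_support zero_support (single_support ha') zero_support hsupZ
            (Or.inr hltA) (Or.inl (by simp [hsumc, fin_sum_single])) (Or.inl hCgz)
          exact hgzne this.2.2.2.2
        · have hYeq : ∀ a', xy a' = 0 := all_zero_of_not_pos hy hY
          by_cases htB : (∑ m, xv m) + (∑ a', xy a')
              = (∑ i', ((b i' : ℝ) + 1) * xt i') + (∑ k', (c k' : ℝ) * xz k')
          · obtain ⟨-, hcz⟩ := G3 htB hVeq hYeq
            have hcj : (c j : ℝ) = 0 := by
              rcases mul_eq_zero.1 (hcz j) with h | h
              · exact h
              · exact absurd h (ne_of_gt hzj)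
            have hcl : (c l : ℝ) = 0 := by
              rcases mul_eq_zero.1 (hcz l) with h | h
              · exact h
              · exact absurd h (ne_of_gt hzl)
            exact hcc (by rw [hcj, hcl])
          · have hltB := lt_of_le_of_ne hB htB
            have := TOOL 0 0 0 0 gz0
              zero_support zero_support zero_support zero_support hsupZ
              (Or.inr hltA) (Or.inr hltB) (Or.inl hCgz)
            exact hgzne this.2.2.2.2
  by_cases hTav : ∃ i, 0 < xt i
  · obtain ⟨i, hti⟩ := hTav
    have htEq : ∀ i', i' ≠ i → xt i' = 0 := by
      intro i' hne
      by_contra h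
      exact S2 i' i hne (lt_of_le_of_ne (ht i') (Ne.symm h)) hti
    have hST : ∑ i', xt i' = xt i := sum_single_of_zeros xt i htEq
    have hSbt : ∑ i', (b i' : ℝ) * xt i' = (b i : ℝ) * xt i :=
      wsum_single _ xt i htEq
    have hSb1t : ∑ i', ((b i' : ℝ) + 1) * xt i' = ((b i : ℝ) + 1) * xt i :=
      wsum_single _ xt i htEq
    have gt1ne : (Pi.single (M := fun _ => ℝ) i 1) ≠ 0 := by
      intro h
      have := congrFun h i
      simp [Pi.single_eq_same] at this
    by_cases hZav : ∃ k', 0 < xz k'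
    · -- MIXED CASE : one positive t and one positive z
      obtain ⟨j, hzj⟩ := hZav
      have hzEq : ∀ k', k' ≠ j → xz k' = 0 := by
        intro k' hne
        by_contra h
        exact S3 k' j hne (lt_of_le_of_ne (hz k') (Ne.symm h)) hzj
      have hSZ : ∑ k', xz k' = xz j := sum_single_of_zeros xz j hzEq
      have hScz : ∑ k', (c k' : ℝ) * xz k' = (c j : ℝ) * xz j := wsum_single _ xz j hzEq
      have hsupT1 : ∀ i', Pi.single (M := fun _ => ℝ) i 1 i' ≠ 0 → 0 < xt i' :=
        single_support hti
      have hsupZ1 : ∀ k', Pi.single (M := fun _ => ℝ) j (-1 : ℝ) k' ≠ 0 → 0 < xz k' :=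
        single_support hzj
      have hCbase : (∑ i', Pi.single (M := fun _ => ℝ) i 1 i')
          + (∑ k', Pi.single (M := fun _ => ℝ) j (-1 : ℝ) k') = 0 := by
        rw [fin_sum_single, fin_sum_single]; ring
      have M1 : ¬ ((∃ m, (lb m : ℝ) < xv m) ∧ (∃ a, 0 < xu a)) := by
        rintro ⟨⟨m, hm⟩, ⟨a, ha⟩⟩
        have := TOOL (Pi.single m ((b i : ℝ) + 1 - (c j : ℝ))) (Pi.single a (-1)) 0
          (Pi.single i 1) (Pi.single j (-1))
          (single_support hm) (single_support ha) zero_support hsupT1 hsupZ1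
          (Or.inl (by rw [fin_sum_single, fin_sum_single, fin_sum_mul_single,
            fin_sum_mul_single]; ring))
          (Or.inl (by rw [fin_sum_single, fin_sum_mul_single, fin_sum_mul_single]; simp))
          (Or.inl hCbase)
        exact gt1ne this.2.2.2.1
      have M2 : ¬ ((∃ m, (lb m : ℝ) < xv m) ∧ (∃ a', 0 < xy a')) := by
        rintro ⟨⟨m, hm⟩, ⟨a', ha'⟩⟩
        have := TOOL (Pi.single m ((b i : ℝ) - (c j : ℝ))) 0 (Pi.single a' 1)
          (Pi.single i 1) (Pi.single j (-1))
          (single_support hm) zero_support (single_support ha') hsupT1 hsupZ1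
          (Or.inl (by rw [fin_sum_single, fin_sum_mul_single, fin_sum_mul_single]; simp))
          (Or.inl (by rw [fin_sum_single, fin_sum_single, fin_sum_mul_single,
            fin_sum_mul_single]; ring))
          (Or.inl hCbase)
        exact gt1ne this.2.2.2.1
      have M3 : ¬ ((∃ a, 0 < xu a) ∧ (∃ a', 0 < xy a')) := by
        rintro ⟨⟨a, ha⟩, ⟨a', ha'⟩⟩
        have := TOOL 0 (Pi.single a ((b i : ℝ) - (c j : ℝ)))
          (Pi.single a' ((b i : ℝ) + 1 - (c j : ℝ))) (Pi.single i 1) (Pi.single j (-1))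
          zero_support (single_support ha) (single_support ha') hsupT1 hsupZ1
          (Or.inl (by rw [fin_sum_single, fin_sum_mul_single, fin_sum_mul_single]; simp))
          (Or.inl (by rw [fin_sum_single, fin_sum_mul_single, fin_sum_mul_single]; simp))
          (Or.inl hCbase)
        exact gt1ne this.2.2.2.1
      have M4 : ¬ ((∃ a, 0 < xu a) ∧ ¬ (∃ m, (lb m : ℝ) < xv m) ∧ ¬ (∃ a', 0 < xy a')) := by
        rintro ⟨⟨a, ha⟩, hnV, hnY⟩
        have hVeq := all_lb_of_not_pos hv hnV
        have hYeq := all_zero_of_not_pos hy hnY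
        by_cases htB : (∑ m, xv m) + (∑ a', xy a')
            = (∑ i', ((b i' : ℝ) + 1) * xt i') + (∑ k', (c k' : ℝ) * xz k')
        · exact absurd ((G3 htB hVeq hYeq).1 i) (ne_of_gt hti)
        · have := TOOL 0 (Pi.single a ((b i : ℝ) - (c j : ℝ))) 0
            (Pi.single i 1) (Pi.single j (-1))
            zero_support (single_support ha) zero_support hsupT1 hsupZ1
            (Or.inl (by rw [fin_sum_single, fin_sum_mul_single, fin_sum_mul_single]; simp))
            (Or.inr (lt_of_le_of_ne hB htB)) (Or.inl hCbase)
          exact gt1ne this.2.2.2.1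
      have M5 : ¬ ((∃ a', 0 < xy a') ∧ ¬ (∃ m, (lb m : ℝ) < xv m) ∧ ¬ (∃ a, 0 < xu a)) := by
        rintro ⟨⟨a', ha'⟩, hnV, hnU⟩
        have hVeq := all_lb_of_not_pos hv hnV
        have hUeq := all_zero_of_not_pos hu hnU
        by_cases htA : (∑ m, xv m) + (∑ a, xu a)
            = (f : ℝ) + (∑ i', (b i' : ℝ) * xt i') + (∑ k', (c k' : ℝ) * xz k')
        · obtain ⟨-, hbt, hcz⟩ := G2 htA hVeq hUeq
          have hbi : (b i : ℝ) = 0 := by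
            rcases mul_eq_zero.1 (hbt i) with h | h
            · exact h
            · exact absurd h (ne_of_gt hti)
          have hcj : (c j : ℝ) = 0 := by
            rcases mul_eq_zero.1 (hcz j) with h | h
            · exact h
            · exact absurd h (ne_of_gt hzj)
          have := TOOL 0 0 (Pi.single a' 1) (Pi.single i 1) (Pi.single j (-1))
            zero_support zero_support (single_support ha') hsupT1 hsupZ1
            (Or.inl (by rw [fin_sum_mul_single, fin_sum_mul_single]; simp [hbi, hcj]))
            (Or.inl (by rw [fin_sum_single, fin_sum_mul_single, fin_sum_mul_single]; simp [hbi, hcj]))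
            (Or.inl hCbase)
          exact gt1ne this.2.2.2.1
        · have := TOOL 0 0 (Pi.single a' ((b i : ℝ) + 1 - (c j : ℝ)))
            (Pi.single i 1) (Pi.single j (-1))
            zero_support zero_support (single_support ha') hsupT1 hsupZ1
            (Or.inr (lt_of_le_of_ne hA htA))
            (Or.inl (by rw [fin_sum_single, fin_sum_mul_single, fin_sum_mul_single]; simp))
            (Or.inl hCbase)
          exact gt1ne this.2.2.2.1
      have M6 : ¬ (¬ (∃ m, (lb m : ℝ) < xv m) ∧ ¬ (∃ a, 0 < xu a) ∧ ¬ (∃ a', 0 < xy a')) := by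
        rintro ⟨hnV, hnU, hnY⟩
        have hVeq := all_lb_of_not_pos hv hnV
        have hUeq := all_zero_of_not_pos hu hnU
        have hYeq := all_zero_of_not_pos hy hnY
        by_cases htB : (∑ m, xv m) + (∑ a', xy a')
            = (∑ i', ((b i' : ℝ) + 1) * xt i') + (∑ k', (c k' : ℝ) * xz k')
        · exact absurd ((G3 htB hVeq hYeq).1 i) (ne_of_gt hti)
        by_cases htA : (∑ m, xv m) + (∑ a, xu a)
            = (f : ℝ) + (∑ i', (b i' : ℝ) * xt i') + (∑ k', (c k' : ℝ) * xz k')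
        · obtain ⟨-, hbt, hcz⟩ := G2 htA hVeq hUeq
          have hbi : (b i : ℝ) = 0 := by
            rcases mul_eq_zero.1 (hbt i) with h | h
            · exact h
            · exact absurd h (ne_of_gt hti)
          have hcj : (c j : ℝ) = 0 := by
            rcases mul_eq_zero.1 (hcz j) with h | h
            · exact h
            · exact absurd h (ne_of_gt hzj)
          have := TOOL 0 0 0 (Pi.single i 1) (Pi.single j (-1))
            zero_support zero_support zero_support hsupT1 hsupZ1
            (Or.inl (by rw [fin_sum_mul_single, fin_sum_mul_single]; simp [hbi, hcj]))
            (Or.inr (lt_of_le_of_ne hB htB)) (Or.inl hCbase)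
          exact gt1ne this.2.2.2.1
        · have := TOOL 0 0 0 (Pi.single i 1) (Pi.single j (-1))
            zero_support zero_support zero_support hsupT1 hsupZ1
            (Or.inr (lt_of_le_of_ne hA htA))
            (Or.inr (lt_of_le_of_ne hB htB)) (Or.inl hCbase)
          exact gt1ne this.2.2.2.1
      -- conclude availability pattern
      have hVex : ∃ m, (lb m : ℝ) < xv m := by
        by_cases hV : ∃ m, (lb m : ℝ) < xv m
        · exact hV
        by_cases hU : ∃ a, 0 < xu a
        · by_cases hY : ∃ a', 0 < xy a'
          · exact absurd ⟨hU, hY⟩ M3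
          · exact absurd ⟨hU, hV, hY⟩ M4
        · by_cases hY : ∃ a', 0 < xy a'
          · exact absurd ⟨hY, hV, hU⟩ M5
          · exact absurd ⟨hV, hU, hY⟩ M6
      have hnU : ¬ ∃ a, 0 < xu a := fun hU => M1 ⟨hVex, hU⟩
      have hnY : ¬ ∃ a', 0 < xy a' := fun hY => M2 ⟨hVex, hY⟩
      obtain ⟨m, hm⟩ := hVex
      have hUeq := all_zero_of_not_pos hu hnU
      have hYeq := all_zero_of_not_pos hy hnY
      have hSU : ∑ a, xu a = 0 := Finset.sum_eq_zero (fun a _ => hUeq a)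
      have hSY : ∑ a', xy a' = 0 := Finset.sum_eq_zero (fun a _ => hYeq a)
      -- M7 : A and B tight
      have htA : (∑ m', xv m') + (∑ a, xu a)
          = (f : ℝ) + (∑ i', (b i' : ℝ) * xt i') + (∑ k', (c k' : ℝ) * xz k') := by
        by_contra hne
        have := TOOL (Pi.single m ((b i : ℝ) + 1 - (c j : ℝ))) 0 0
          (Pi.single i 1) (Pi.single j (-1))
          (single_support hm) zero_support zero_support hsupT1 hsupZ1
          (Or.inr (lt_of_le_of_ne hA hne))
          (Or.inl (by rw [fin_sum_single, fin_sum_mul_single, fin_sum_mul_single]; simp))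
          (Or.inl hCbase)
        exact gt1ne this.2.2.2.1
      have htB : (∑ m', xv m') + (∑ a', xy a')
          = (∑ i', ((b i' : ℝ) + 1) * xt i') + (∑ k', (c k' : ℝ) * xz k') := by
        by_contra hne
        have := TOOL (Pi.single m ((b i : ℝ) - (c j : ℝ))) 0 0
          (Pi.single i 1) (Pi.single j (-1))
          (single_support hm) zero_support zero_support hsupT1 hsupZ1
          (Or.inl (by rw [fin_sum_single, fin_sum_mul_single, fin_sum_mul_single]; simp))
          (Or.inr (lt_of_le_of_ne hB hne))
          (Or.inl hCbase)
        exact gt1ne this.2.2.2.1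
      -- M8 : value of xt i
      have hxti : xt i = (f : ℝ) := by
        rw [hSU, hSbt, hScz] at htA
        rw [hSY, hSb1t, hScz] at htB
        have hexp : ((b i : ℝ) + 1) * xt i = (b i : ℝ) * xt i + xt i := by ring
        linarith
      -- M9 : C tight
      have htC : (∑ i', xt i') + (∑ k', xz k') = (EF : ℝ) := by
        by_contra hne
        have gz2ne : (Pi.single (M := fun _ => ℝ) j (1 : ℝ)) ≠ 0 := by
          intro h
          have := congrFun h j
          simp [Pi.single_eq_same] at this
        have := TOOL (Pi.single m ((c j : ℝ))) 0 0 0 (Pi.single j 1)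
          (single_support hm) zero_support zero_support zero_support (single_support hzj)
          (Or.inl (by rw [fin_sum_single, fin_sum_mul_single]; simp))
          (Or.inl (by rw [fin_sum_single, fin_sum_mul_single]; simp))
          (Or.inr (lt_of_le_of_ne hC hne))
        exact gz2ne this.2.2.2.2
      have hxzj : xz j = (EF : ℝ) - (f : ℝ) := by
        rw [hST, hSZ, hxti] at htC
        linarith
      constructor
      · intro i'
        rcases eq_or_ne i' i with rfl | hne
        · exact ⟨f, hxti⟩
        · exact ⟨0, by rw [htEq i' hne]; simp⟩
      · intro k'
        rcases eq_or_ne k' j with rfl | hne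
        · exact ⟨EF - f, by rw [hxzj]; push_cast; ring⟩
        · exact ⟨0, by rw [hzEq k' hne]; simp⟩
    · -- single positive t, no positive z
      have hZeq : ∀ k', xz k' = 0 := all_zero_of_not_pos hz hZav
      have hSZ : ∑ k', xz k' = 0 := Finset.sum_eq_zero (fun k' _ => hZeq k')
      have hScz : ∑ k', (c k' : ℝ) * xz k' = 0 :=
        Finset.sum_eq_zero (fun k' _ => by rw [hZeq k', mul_zero])
      have hzout : ∀ k', ∃ m0 : ℤ, xz k' = (m0 : ℝ) := fun k' => ⟨0, by rw [hZeq k']; simp⟩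
      have hsupT1 : ∀ i', Pi.single (M := fun _ => ℝ) i 1 i' ≠ 0 → 0 < xt i' :=
        single_support hti
      by_cases htC : (∑ i', xt i') + (∑ k', xz k') = (EF : ℝ)
      · have hxti : xt i = (EF : ℝ) := by
          rw [hST, hSZ] at htC
          linarith
        refine ⟨fun i' => ?_, hzout⟩
        rcases eq_or_ne i' i with rfl | hne
        · exact ⟨EF, hxti⟩
        · exact ⟨0, by rw [htEq i' hne]; simp⟩
      · -- C slack : xt i = f
        have hltC := lt_of_le_of_ne hC htC
        have C1 : ¬ ((∃ m, (lb m : ℝ) < xv m) ∧ (∃ a, 0 < xu a)) := by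
          rintro ⟨⟨m, hm⟩, ⟨a, ha⟩⟩
          have := TOOL (Pi.single m ((b i : ℝ) + 1)) (Pi.single a (-1)) 0 (Pi.single i 1) 0
            (single_support hm) (single_support ha) zero_support hsupT1 zero_support
            (Or.inl (by rw [fin_sum_single, fin_sum_single, fin_sum_mul_single]; simp))
            (Or.inl (by rw [fin_sum_single, fin_sum_mul_single]; simp))
            (Or.inr hltC)
          exact gt1ne this.2.2.2.1
        have C2 : ¬ ((∃ m, (lb m : ℝ) < xv m) ∧ (∃ a', 0 < xy a')) := by
          rintro ⟨⟨m, hm⟩, ⟨a', ha'⟩⟩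
          have := TOOL (Pi.single m ((b i : ℝ))) 0 (Pi.single a' 1) (Pi.single i 1) 0
            (single_support hm) zero_support (single_support ha') hsupT1 zero_support
            (Or.inl (by rw [fin_sum_single, fin_sum_mul_single]; simp))
            (Or.inl (by rw [fin_sum_single, fin_sum_single, fin_sum_mul_single]; simp))
            (Or.inr hltC)
          exact gt1ne this.2.2.2.1
        have C3 : ¬ ((∃ a, 0 < xu a) ∧ (∃ a', 0 < xy a')) := by
          rintro ⟨⟨a, ha⟩, ⟨a', ha'⟩⟩
          have := TOOL 0 (Pi.single a ((b i : ℝ))) (Pi.single a' ((b i : ℝ) + 1))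
            (Pi.single i 1) 0
            zero_support (single_support ha) (single_support ha') hsupT1 zero_support
            (Or.inl (by rw [fin_sum_single, fin_sum_mul_single]; simp))
            (Or.inl (by rw [fin_sum_single, fin_sum_mul_single]; simp))
            (Or.inr hltC)
          exact gt1ne this.2.2.2.1
        have C4 : ¬ ((∃ a, 0 < xu a) ∧ ¬ (∃ m, (lb m : ℝ) < xv m) ∧ ¬ (∃ a', 0 < xy a')) := by
          rintro ⟨⟨a, ha⟩, hnV, hnY⟩
          have hVeq := all_lb_of_not_pos hv hnV
          have hYeq := all_zero_of_not_pos hy hnY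
          by_cases htB : (∑ m, xv m) + (∑ a', xy a')
              = (∑ i', ((b i' : ℝ) + 1) * xt i') + (∑ k', (c k' : ℝ) * xz k')
          · exact absurd ((G3 htB hVeq hYeq).1 i) (ne_of_gt hti)
          · have := TOOL 0 (Pi.single a ((b i : ℝ))) 0 (Pi.single i 1) 0
              zero_support (single_support ha) zero_support hsupT1 zero_support
              (Or.inl (by rw [fin_sum_single, fin_sum_mul_single]; simp))
              (Or.inr (lt_of_le_of_ne hB htB)) (Or.inr hltC)
            exact gt1ne this.2.2.2.1
        have C5 : ¬ ((∃ a', 0 < xy a') ∧ ¬ (∃ m, (lb m : ℝ) < xv m) ∧ ¬ (∃ a, 0 < xu a)) := by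
          rintro ⟨⟨a', ha'⟩, hnV, hnU⟩
          have hVeq := all_lb_of_not_pos hv hnV
          have hUeq := all_zero_of_not_pos hu hnU
          by_cases htA : (∑ m, xv m) + (∑ a, xu a)
              = (f : ℝ) + (∑ i', (b i' : ℝ) * xt i') + (∑ k', (c k' : ℝ) * xz k')
          · obtain ⟨-, hbt, -⟩ := G2 htA hVeq hUeq
            have hbi : (b i : ℝ) = 0 := by
              rcases mul_eq_zero.1 (hbt i) with h | h
              · exact h
              · exact absurd h (ne_of_gt hti)
            have := TOOL 0 0 (Pi.single a' 1) (Pi.single i 1) 0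
              zero_support zero_support (single_support ha') hsupT1 zero_support
              (Or.inl (by rw [fin_sum_mul_single]; simp [hbi]))
              (Or.inl (by rw [fin_sum_single, fin_sum_mul_single]; simp [hbi]))
              (Or.inr hltC)
            exact gt1ne this.2.2.2.1
          · have := TOOL 0 0 (Pi.single a' ((b i : ℝ) + 1)) (Pi.single i 1) 0
              zero_support zero_support (single_support ha') hsupT1 zero_support
              (Or.inr (lt_of_le_of_ne hA htA))
              (Or.inl (by rw [fin_sum_single, fin_sum_mul_single]; simp))
              (Or.inr hltC)
            exact gt1ne this.2.2.2.1
        have C6 : ¬ (¬ (∃ m, (lb m : ℝ) < xv m) ∧ ¬ (∃ a, 0 < xu a) ∧ ¬ (∃ a', 0 < xy a')) := by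
          rintro ⟨hnV, hnU, hnY⟩
          have hVeq := all_lb_of_not_pos hv hnV
          have hUeq := all_zero_of_not_pos hu hnU
          have hYeq := all_zero_of_not_pos hy hnY
          by_cases htB : (∑ m, xv m) + (∑ a', xy a')
              = (∑ i', ((b i' : ℝ) + 1) * xt i') + (∑ k', (c k' : ℝ) * xz k')
          · exact absurd ((G3 htB hVeq hYeq).1 i) (ne_of_gt hti)
          by_cases htA : (∑ m, xv m) + (∑ a, xu a)
              = (f : ℝ) + (∑ i', (b i' : ℝ) * xt i') + (∑ k', (c k' : ℝ) * xz k')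
          · obtain ⟨-, hbt, -⟩ := G2 htA hVeq hUeq
            have hbi : (b i : ℝ) = 0 := by
              rcases mul_eq_zero.1 (hbt i) with h | h
              · exact h
              · exact absurd h (ne_of_gt hti)
            have := TOOL 0 0 0 (Pi.single i 1) 0
              zero_support zero_support zero_support hsupT1 zero_support
              (Or.inl (by rw [fin_sum_mul_single]; simp [hbi]))
              (Or.inr (lt_of_le_of_ne hB htB)) (Or.inr hltC)
            exact gt1ne this.2.2.2.1
          · have := TOOL 0 0 0 (Pi.single i 1) 0
              zero_support zero_support zero_support hsupT1 zero_support
              (Or.inr (lt_of_le_of_ne hA htA))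
              (Or.inr (lt_of_le_of_ne hB htB)) (Or.inr hltC)
            exact gt1ne this.2.2.2.1
        have hVex : ∃ m, (lb m : ℝ) < xv m := by
          by_cases hV : ∃ m, (lb m : ℝ) < xv m
          · exact hV
          by_cases hU : ∃ a, 0 < xu a
          · by_cases hY : ∃ a', 0 < xy a'
            · exact absurd ⟨hU, hY⟩ C3
            · exact absurd ⟨hU, hV, hY⟩ C4
          · by_cases hY : ∃ a', 0 < xy a'
            · exact absurd ⟨hY, hV, hU⟩ C5
            · exact absurd ⟨hV, hU, hY⟩ C6
        have hnU : ¬ ∃ a, 0 < xu a := fun hU => C1 ⟨hVex, hU⟩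
        have hnY : ¬ ∃ a', 0 < xy a' := fun hY => C2 ⟨hVex, hY⟩
        obtain ⟨m, hm⟩ := hVex
        have hUeq := all_zero_of_not_pos hu hnU
        have hYeq := all_zero_of_not_pos hy hnY
        have hSU : ∑ a, xu a = 0 := Finset.sum_eq_zero (fun a _ => hUeq a)
        have hSY : ∑ a', xy a' = 0 := Finset.sum_eq_zero (fun a _ => hYeq a)
        have htA : (∑ m', xv m') + (∑ a, xu a)
            = (f : ℝ) + (∑ i', (b i' : ℝ) * xt i') + (∑ k', (c k' : ℝ) * xz k') := by
          by_contra hne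
          have := TOOL (Pi.single m ((b i : ℝ) + 1)) 0 0 (Pi.single i 1) 0
            (single_support hm) zero_support zero_support hsupT1 zero_support
            (Or.inr (lt_of_le_of_ne hA hne))
            (Or.inl (by rw [fin_sum_single, fin_sum_mul_single]; simp))
            (Or.inr hltC)
          exact gt1ne this.2.2.2.1
        have htB : (∑ m', xv m') + (∑ a', xy a')
            = (∑ i', ((b i' : ℝ) + 1) * xt i') + (∑ k', (c k' : ℝ) * xz k') := by
          by_contra hne
          have := TOOL (Pi.single m ((b i : ℝ))) 0 0 (Pi.single i 1) 0
            (single_support hm) zero_support zero_support hsupT1 zero_support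
            (Or.inl (by rw [fin_sum_single, fin_sum_mul_single]; simp))
            (Or.inr (lt_of_le_of_ne hB hne))
            (Or.inr hltC)
          exact gt1ne this.2.2.2.1
        have hxti : xt i = (f : ℝ) := by
          rw [hSU, hSbt, hScz] at htA
          rw [hSY, hSb1t, hScz] at htB
          have hexp : ((b i : ℝ) + 1) * xt i = (b i : ℝ) * xt i + xt i := by ring
          linarith
        refine ⟨fun i' => ?_, hzout⟩
        rcases eq_or_ne i' i with rfl | hne
        · exact ⟨f, hxti⟩
        · exact ⟨0, by rw [htEq i' hne]; simp⟩
  · -- no positive t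
    have htEq : ∀ i', xt i' = 0 := all_zero_of_not_pos ht hTav
    have hST : ∑ i', xt i' = 0 := Finset.sum_eq_zero (fun i' _ => htEq i')
    have htout : ∀ i', ∃ k : ℤ, xt i' = (k : ℝ) := fun i' => ⟨0, by rw [htEq i']; simp⟩
    by_cases hZav : ∃ k', 0 < xz k'
    · -- single positive z, no positive t : C must be tight
      obtain ⟨j, hzj⟩ := hZav
      have hzEq : ∀ k', k' ≠ j → xz k' = 0 := by
        intro k' hne
        by_contra h
        exact S3 k' j hne (lt_of_le_of_ne (hz k') (Ne.symm h)) hzj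
      have hSZ : ∑ k', xz k' = xz j := sum_single_of_zeros xz j hzEq
      have gz2ne : (Pi.single (M := fun _ => ℝ) j (1 : ℝ)) ≠ 0 := by
        intro h
        have := congrFun h j
        simp [Pi.single_eq_same] at this
      have hsupZ1 : ∀ k', Pi.single (M := fun _ => ℝ) j (1 : ℝ) k' ≠ 0 → 0 < xz k' :=
        single_support hzj
      have htC : (∑ i', xt i') + (∑ k', xz k') = (EF : ℝ) := by
        by_contra hne
        have hltC := lt_of_le_of_ne hC hne
        -- show contradiction in all availability cases
        have hnV : ¬ ∃ m, (lb m : ℝ) < xv m := by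
          rintro ⟨m, hm⟩
          have := TOOL (Pi.single m ((c j : ℝ))) 0 0 0 (Pi.single j 1)
            (single_support hm) zero_support zero_support zero_support hsupZ1
            (Or.inl (by rw [fin_sum_single, fin_sum_mul_single]; simp))
            (Or.inl (by rw [fin_sum_single, fin_sum_mul_single]; simp))
            (Or.inr hltC)
          exact gz2ne this.2.2.2.2
        have hVeq := all_lb_of_not_pos hv hnV
        by_cases hU : ∃ a, 0 < xu a
        · obtain ⟨a, ha⟩ := hU
          by_cases hY : ∃ a', 0 < xy a'
          · obtain ⟨a', ha'⟩ := hY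
            have := TOOL 0 (Pi.single a ((c j : ℝ))) (Pi.single a' ((c j : ℝ))) 0
              (Pi.single j 1)
              zero_support (single_support ha) (single_support ha') zero_support hsupZ1
              (Or.inl (by rw [fin_sum_single, fin_sum_mul_single]; simp))
              (Or.inl (by rw [fin_sum_single, fin_sum_mul_single]; simp))
              (Or.inr hltC)
            exact gz2ne this.2.2.2.2
          · have hYeq := all_zero_of_not_pos hy hY
            by_cases htB : (∑ m, xv m) + (∑ a', xy a')
                = (∑ i', ((b i' : ℝ) + 1) * xt i') + (∑ k', (c k' : ℝ) * xz k')
            · obtain ⟨-, hcz⟩ := G3 htB hVeq hYeq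
              have hcj : (c j : ℝ) = 0 := by
                rcases mul_eq_zero.1 (hcz j) with h | h
                · exact h
                · exact absurd h (ne_of_gt hzj)
              have := TOOL 0 0 0 0 (Pi.single j 1)
                zero_support zero_support zero_support zero_support hsupZ1
                (Or.inl (by rw [fin_sum_mul_single]; simp [hcj]))
                (Or.inl (by rw [fin_sum_mul_single]; simp [hcj]))
                (Or.inr hltC)
              exact gz2ne this.2.2.2.2
            · have := TOOL 0 (Pi.single a ((c j : ℝ))) 0 0 (Pi.single j 1)
                zero_support (single_support ha) zero_support zero_support hsupZ1
                (Or.inl (by rw [fin_sum_single, fin_sum_mul_single]; simp))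
                (Or.inr (lt_of_le_of_ne hB htB)) (Or.inr hltC)
              exact gz2ne this.2.2.2.2
        · have hUeq := all_zero_of_not_pos hu hU
          by_cases htA : (∑ m, xv m) + (∑ a, xu a)
              = (f : ℝ) + (∑ i', (b i' : ℝ) * xt i') + (∑ k', (c k' : ℝ) * xz k')
          · obtain ⟨-, -, hcz⟩ := G2 htA hVeq hUeq
            have hcj : (c j : ℝ) = 0 := by
              rcases mul_eq_zero.1 (hcz j) with h | h
              · exact h
              · exact absurd h (ne_of_gt hzj)
            have := TOOL 0 0 0 0 (Pi.single j 1)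
              zero_support zero_support zero_support zero_support hsupZ1
              (Or.inl (by rw [fin_sum_mul_single]; simp [hcj]))
              (Or.inl (by rw [fin_sum_mul_single]; simp [hcj]))
              (Or.inr hltC)
            exact gz2ne this.2.2.2.2
          · by_cases hY : ∃ a', 0 < xy a'
            · obtain ⟨a', ha'⟩ := hY
              have := TOOL 0 0 (Pi.single a' ((c j : ℝ))) 0 (Pi.single j 1)
                zero_support zero_support (single_support ha') zero_support hsupZ1
                (Or.inr (lt_of_le_of_ne hA htA))
                (Or.inl (by rw [fin_sum_single, fin_sum_mul_single]; simp))
                (Or.inr hltC)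
              exact gz2ne this.2.2.2.2
            · have hYeq := all_zero_of_not_pos hy hY
              by_cases htB : (∑ m, xv m) + (∑ a', xy a')
                  = (∑ i', ((b i' : ℝ) + 1) * xt i') + (∑ k', (c k' : ℝ) * xz k')
              · obtain ⟨-, hcz⟩ := G3 htB hVeq hYeq
                have hcj : (c j : ℝ) = 0 := by
                  rcases mul_eq_zero.1 (hcz j) with h | h
                  · exact h
                  · exact absurd h (ne_of_gt hzj)
                have := TOOL 0 0 0 0 (Pi.single j 1)
                  zero_support zero_support zero_support zero_support hsupZ1
                  (Or.inl (by rw [fin_sum_mul_single]; simp [hcj]))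
                  (Or.inl (by rw [fin_sum_mul_single]; simp [hcj]))
                  (Or.inr hltC)
                exact gz2ne this.2.2.2.2
              · have := TOOL 0 0 0 0 (Pi.single j 1)
                  zero_support zero_support zero_support zero_support hsupZ1
                  (Or.inr (lt_of_le_of_ne hA htA))
                  (Or.inr (lt_of_le_of_ne hB htB)) (Or.inr hltC)
                exact gz2ne this.2.2.2.2
      have hxzj : xz j = (EF : ℝ) := by
        rw [hST, hSZ] at htC
        linarith
      refine ⟨htout, fun k' => ?_⟩
      rcases eq_or_ne k' j with rfl | hne
      · exact ⟨EF, hxzj⟩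
      · exact ⟨0, by rw [hzEq k' hne]; simp⟩
    · have hZeq : ∀ k', xz k' = 0 := all_zero_of_not_pos hz hZav
      exact ⟨htout, fun k' => ⟨0, by rw [hZeq k']; simp⟩⟩

end KeyTZ
-- assumes part1, part2, part3 content (will be concatenated)
section Bridge
variable {p0 p1 p2 p3 p4 : ℕ}
  (b : Fin p3 → ℤ) (c : Fin (p2 - 1) → ℤ) (d e f : ℤ)

local notation "Col" => BCol p0 p1 p2 p3 p4
local notation "AA" => batyrevA p0 p1 p2 p3 p4 b c
local notation "hh" => batyrevH p0 p1 p2 p3 p4 d e f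

lemma mem_polyP_batyrev (hp1 : 1 ≤ p1) (hp2 : 1 ≤ p2) (hp4 : 1 ≤ p4) (x : Col → ℝ)
    (hx : x ∈ polyP AA hh) :
    (∀ i : Fin p0, ((if (i : ℕ) = 0 then -d else 0 : ℤ) : ℝ) ≤ x (vcol i)) ∧
    (∀ a, 0 ≤ x (ucol a)) ∧ (∀ a, 0 ≤ x (ycol a)) ∧
    (∀ i, 0 ≤ x (tcol i)) ∧ (∀ k, 0 ≤ x (zcol k)) ∧
    ((∑ i, x (vcol i)) + (∑ a, x (ucol a))
      ≤ (f : ℝ) + (∑ i, (b i : ℝ) * x (tcol i)) + (∑ k, (c k : ℝ) * x (zcol k))) ∧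
    ((∑ i, x (vcol i)) + (∑ a, x (ycol a))
      ≤ (∑ i, ((b i : ℝ) + 1) * x (tcol i)) + (∑ k, (c k : ℝ) * x (zcol k))) ∧
    ((∑ i, x (tcol i)) + (∑ k, x (zcol k)) ≤ ((e + f : ℤ) : ℝ)) := by
  have hj0 : (0 : ℕ) < p4 := hp4
  have hy0 : (0 : ℕ) < p1 := hp1
  have hz0 : (0 : ℕ) < p2 := hp2
  refine ⟨?_, ?_, ?_, ?_, ?_, ?_, ?_, ?_⟩
  · intro i
    have := hx (.inl i)
    rw [rowsum_v] at this
    rcases eq_or_ne ((i : ℕ)) 0 with h0 | h0 <;>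
      simp [batyrevH, h0] at this ⊢ <;> linarith
  · intro a
    have hlt : (a : ℕ) + 1 < p4 := by omega
    have := hx (.inr (.inl ⟨(a : ℕ) + 1, hlt⟩))
    rw [rowsum_usucc b c ⟨(a : ℕ) + 1, hlt⟩ a rfl] at this
    simpa [batyrevH] using this
  · intro a
    have hlt : (a : ℕ) + 1 < p1 := by omega
    have := hx (.inr (.inr (.inl ⟨(a : ℕ) + 1, hlt⟩)))
    rw [rowsum_ysucc b c ⟨(a : ℕ) + 1, hlt⟩ a rfl] at this
    simpa [batyrevH] using this
  · intro i
    have := hx (.inr (.inr (.inr (.inl i))))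
    rw [rowsum_t] at this
    simpa [batyrevH] using this
  · intro k
    have hlt : (k : ℕ) + 1 < p2 := by omega
    have := hx (.inr (.inr (.inr (.inr ⟨(k : ℕ) + 1, hlt⟩))))
    rw [rowsum_zsucc b c ⟨(k : ℕ) + 1, hlt⟩ k rfl] at this
    simpa [batyrevH] using this
  · have := hx (.inr (.inl ⟨0, hj0⟩))
    rw [rowsum_u0 b c ⟨0, hj0⟩ rfl] at this
    simp only [batyrevH] at this
    push_cast at this ⊢
    linarith
  · have := hx (.inr (.inr (.inl ⟨0, hy0⟩)))
    rw [rowsum_y0 b c ⟨0, hy0⟩ rfl] at this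
    simp only [batyrevH] at this
    push_cast at this ⊢
    linarith
  · have := hx (.inr (.inr (.inr (.inr ⟨0, hz0⟩))))
    rw [rowsum_z0 b c ⟨0, hz0⟩ rfl] at this
    simp only [batyrevH] at this
    push_cast at this ⊢
    linarith

end Bridge
section ExtremeInt
variable {p0 p1 p2 p3 p4 : ℕ}
  (b : Fin p3 → ℤ) (c : Fin (p2 - 1) → ℤ) (d e f : ℤ)

local notation "Col" => BCol p0 p1 p2 p3 p4
local notation "AA" => batyrevA p0 p1 p2 p3 p4 b c
local notation "hh" => batyrevH p0 p1 p2 p3 p4 d e f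

lemma batyrev_extreme_intZ (hp1 : 1 ≤ p1) (hp2 : 1 ≤ p2) (hp4 : 1 ≤ p4)
    (hb : ∀ i, 0 ≤ b i) (hc : ∀ k, 0 ≤ c k) (hd : 0 ≤ d) (hf : 0 ≤ f)
    (x : Col → ℝ) (hx : x ∈ Set.extremePoints ℝ (polyP AA hh)) :
    x ∈ intZ := by
  classical
  have hxP : x ∈ polyP AA hh := hx.1
  obtain ⟨hv, hu, hy, ht, hz, hA, hB, hC⟩ := mem_polyP_batyrev b c d e f hp1 hp2 hp4 x hxP
  set lb : Fin p0 → ℤ := fun i => if (i : ℕ) = 0 then -d else 0 with hlbdef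
  have hlb : ∀ i, lb i ≤ 0 := by
    intro i
    rw [hlbdef]
    dsimp only
    split_ifs <;> omega
  have hv' : ∀ i, (lb i : ℝ) ≤ x (vcol i) := by
    intro i
    have := hv i
    rw [hlbdef]
    dsimp only
    split_ifs with h0 <;> simp [h0] at this ⊢ <;> simpa using this
  -- the TOOL
  have TOOL : ∀ (gv : Fin p0 → ℝ) (gu : Fin (p4 - 1) → ℝ) (gy : Fin (p1 - 1) → ℝ)
      (gt : Fin p3 → ℝ) (gz : Fin (p2 - 1) → ℝ),
      (∀ i, gv i ≠ 0 → (lb i : ℝ) < x (vcol i)) → (∀ a, gu a ≠ 0 → 0 < x (ucol a)) →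
      (∀ a, gy a ≠ 0 → 0 < x (ycol a)) → (∀ i, gt i ≠ 0 → 0 < x (tcol i)) →
      (∀ k, gz k ≠ 0 → 0 < x (zcol k)) →
      ((∑ i, gv i) + (∑ a, gu a) - (∑ i, (b i : ℝ) * gt i) - (∑ k, (c k : ℝ) * gz k) = 0 ∨
        (∑ i, x (vcol i)) + (∑ a, x (ucol a))
          < (f : ℝ) + (∑ i, (b i : ℝ) * x (tcol i)) + (∑ k, (c k : ℝ) * x (zcol k))) →
      ((∑ i, gv i) + (∑ a, gy a) - (∑ i, ((b i : ℝ) + 1) * gt i)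
          - (∑ k, (c k : ℝ) * gz k) = 0 ∨
        (∑ i, x (vcol i)) + (∑ a, x (ycol a))
          < (∑ i, ((b i : ℝ) + 1) * x (tcol i)) + (∑ k, (c k : ℝ) * x (zcol k))) →
      ((∑ i, gt i) + (∑ k, gz k) = 0 ∨
        (∑ i, x (tcol i)) + (∑ k, x (zcol k)) < ((e + f : ℤ) : ℝ)) →
      gv = 0 ∧ gu = 0 ∧ gy = 0 ∧ gt = 0 ∧ gz = 0 := by
    intro gv gu gy gt gz sv su sy st sz cA cB cC
    set g : Col → ℝ := Sum.elim (Sum.elim gv (Sum.elim gu gy)) (Sum.elim gt gz) with hgdef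
    have hgv : ∀ i, g (vcol i) = gv i := fun i => rfl
    have hgu : ∀ a, g (ucol a) = gu a := fun a => rfl
    have hgy : ∀ a, g (ycol a) = gy a := fun a => rfl
    have hgt : ∀ i, g (tcol i) = gt i := fun i => rfl
    have hgz : ∀ k, g (zcol k) = gz k := fun k => rfl
    have hg0 : g = 0 := by
      apply extreme_perturb AA hh hx g
      intro r
      rcases r with i | r
      · -- v rows
        rw [rowsum_v, rowsum_v]
        by_cases hgi : gv i = 0
        · exact Or.inl (by rw [hgv]; exact hgi)
        · refine Or.inr ?_
          have := sv i hgi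
          rcases eq_or_ne ((i : ℕ)) 0 with h0 | h0 <;>
            rw [hlbdef] at this <;> simp [batyrevH, h0] at this ⊢ <;> linarith
      rcases r with j | r
      · -- u rows
        by_cases hj : (j : ℕ) = 0
        · rw [rowsum_u0 b c j hj, rowsum_u0 b c j hj]
          rcases cA with h | h
          · exact Or.inl (by simp only [hgv, hgu, hgt, hgz]; linarith)
          · refine Or.inr ?_
            simp only [batyrevH, hj, if_pos]
            linarith
        · have hmlt : (j : ℕ) - 1 < p4 - 1 := by omega
          have hjm : (j : ℕ) = ((⟨(j : ℕ) - 1, hmlt⟩ : Fin (p4 - 1)) : ℕ) + 1 := by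
            simp; omega
          rw [rowsum_usucc b c j _ hjm, rowsum_usucc b c j _ hjm]
          by_cases hga : gu ⟨(j : ℕ) - 1, hmlt⟩ = 0
          · exact Or.inl (by rw [hgu]; exact hga)
          · refine Or.inr ?_
            have := su _ hga
            simp [batyrevH, hj]
            exact this
      rcases r with j | r
      · -- y rows
        by_cases hj : (j : ℕ) = 0
        · rw [rowsum_y0 b c j hj, rowsum_y0 b c j hj]
          rcases cB with h | h
          · exact Or.inl (by simp only [hgv, hgy, hgt, hgz]; linarith)
          · refine Or.inr ?_
            simp only [batyrevH]
            simp
            linarith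
        · have hmlt : (j : ℕ) - 1 < p1 - 1 := by omega
          have hjm : (j : ℕ) = ((⟨(j : ℕ) - 1, hmlt⟩ : Fin (p1 - 1)) : ℕ) + 1 := by
            simp; omega
          rw [rowsum_ysucc b c j _ hjm, rowsum_ysucc b c j _ hjm]
          by_cases hga : gy ⟨(j : ℕ) - 1, hmlt⟩ = 0
          · exact Or.inl (by rw [hgy]; exact hga)
          · refine Or.inr ?_
            have := sy _ hga
            simp [batyrevH, hj]
            exact this
      rcases r with i | j
      · -- t rows
        rw [rowsum_t, rowsum_t]
        by_cases hgi : gt i = 0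
        · exact Or.inl (by rw [hgt]; exact hgi)
        · refine Or.inr ?_
          have := st i hgi
          simp [batyrevH]
          exact this
      · -- z rows
        by_cases hj : (j : ℕ) = 0
        · rw [rowsum_z0 b c j hj, rowsum_z0 b c j hj]
          rcases cC with h | h
          · exact Or.inl (by simp only [hgt, hgz]; linarith)
          · refine Or.inr ?_
            simp only [batyrevH, hj, if_pos]
            push_cast at h ⊢
            linarith
        · have hmlt : (j : ℕ) - 1 < p2 - 1 := by omega
          have hjm : (j : ℕ) = ((⟨(j : ℕ) - 1, hmlt⟩ : Fin (p2 - 1)) : ℕ) + 1 := by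
            simp; omega
          rw [rowsum_zsucc b c j _ hjm, rowsum_zsucc b c j _ hjm]
          by_cases hga : gz ⟨(j : ℕ) - 1, hmlt⟩ = 0
          · exact Or.inl (by rw [hgz]; exact hga)
          · refine Or.inr ?_
            have := sz _ hga
            simp [batyrevH, hj]
            exact this
    refine ⟨?_, ?_, ?_, ?_, ?_⟩
    · funext i; exact congrFun hg0 (vcol i)
    · funext a; exact congrFun hg0 (ucol a)
    · funext a; exact congrFun hg0 (ycol a)
    · funext i; exact congrFun hg0 (tcol i)
    · funext k; exact congrFun hg0 (zcol k)
  -- apply keyTZ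
  obtain ⟨htint, hzint⟩ := keyTZ lb hlb b hb c hc f (e + f) hf
    (fun i => x (vcol i)) (fun a => x (ucol a)) (fun a => x (ycol a))
    (fun i => x (tcol i)) (fun k => x (zcol k))
    hv' hu hy ht hz hA hB hC TOOL
  -- integrality of the right-hand sides RA and RB
  set kt : Fin p3 → ℤ := fun i => (htint i).choose with hktdef
  have hktspec : ∀ i, x (tcol i) = ((kt i : ℤ) : ℝ) := fun i => (htint i).choose_spec
  set kz : Fin (p2 - 1) → ℤ := fun k => (hzint k).choose with hkzdef
  have hkzspec : ∀ k, x (zcol k) = ((kz k : ℤ) : ℝ) := fun k => (hzint k).choose_spec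
  have h1 : ∑ i, (b i : ℝ) * x (tcol i) = ∑ i, (b i : ℝ) * ((kt i : ℤ) : ℝ) :=
    Finset.sum_congr rfl (fun i _ => by rw [hktspec i])
  have h1' : ∑ i, ((b i : ℝ) + 1) * x (tcol i) = ∑ i, ((b i : ℝ) + 1) * ((kt i : ℤ) : ℝ) :=
    Finset.sum_congr rfl (fun i _ => by rw [hktspec i])
  have h2 : ∑ k, (c k : ℝ) * x (zcol k) = ∑ k, (c k : ℝ) * ((kz k : ℤ) : ℝ) :=
    Finset.sum_congr rfl (fun k _ => by rw [hkzspec k])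
  have hRA : (f : ℝ) + (∑ i, (b i : ℝ) * x (tcol i)) + (∑ k, (c k : ℝ) * x (zcol k))
      = ((f + (∑ i, b i * kt i) + (∑ k, c k * kz k) : ℤ) : ℝ) := by
    rw [h1, h2]
    push_cast
    ring
  have hRB : (∑ i, ((b i : ℝ) + 1) * x (tcol i)) + (∑ k, (c k : ℝ) * x (zcol k))
      = (((∑ i, (b i + 1) * kt i) + (∑ k, c k * kz k) : ℤ) : ℝ) := by
    rw [h1', h2]
    push_cast
    ring
  -- apply sblock
  obtain ⟨hvint, huint, hyint⟩ := sblock lb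
    (fun i => x (vcol i)) (fun a => x (ucol a)) (fun a => x (ycol a))
    ((f : ℝ) + (∑ i, (b i : ℝ) * x (tcol i)) + (∑ k, (c k : ℝ) * x (zcol k)))
    ((∑ i, ((b i : ℝ) + 1) * x (tcol i)) + (∑ k, (c k : ℝ) * x (zcol k)))
    (f + (∑ i, b i * kt i) + (∑ k, c k * kz k))
    ((∑ i, (b i + 1) * kt i) + (∑ k, c k * kz k))
    hRA hRB hv' hu hy hA hB (by
      intro gv gu gy sv su sy cA cB
      have := TOOL gv gu gy 0 0 sv su sy zero_support zero_support
        (by rcases cA with h | h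
            · exact Or.inl (by simp [h])
            · exact Or.inr h)
        (by rcases cB with h | h
            · exact Or.inl (by simp [h])
            · exact Or.inr h)
        (Or.inl (by simp))
      exact ⟨this.1, this.2.1, this.2.2.1⟩)
  intro col
  rcases col with co | co
  · rcases co with i | co
    · exact hvint i
    · rcases co with a | a
      · exact huint a
      · exact hyint a
  · rcases co with i | k
    · exact htint i
    · exact hzint k

end ExtremeInt
section Bounded

lemma coord_le_of_sum {n : ℕ} (w : Fin n → ℝ) (lo : ℝ) (hlo : ∀ i, -lo ≤ w i)
    (hlo0 : 0 ≤ lo) (S : ℝ) (hS : ∑ i, w i ≤ S) : ∀ i, w i ≤ S + n * lo := by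
  classical
  intro i
  have hsplit : w i + ∑ j ∈ Finset.univ.erase i, w j = ∑ j, w j :=
    Finset.add_sum_erase _ w (Finset.mem_univ i)
  have hcard : ((Finset.univ.erase i).card : ℝ) ≤ (n : ℝ) := by
    have := Finset.card_erase_le (a := i) (s := (Finset.univ : Finset (Fin n)))
    have h2 : (Finset.univ : Finset (Fin n)).card = n := Finset.card_univ.trans (Fintype.card_fin n)
    exact_mod_cast le_trans this (le_of_eq h2)
  have h3 : -((n : ℝ) * lo) ≤ ∑ j ∈ Finset.univ.erase i, w j := by
    have h4 : ∑ j ∈ Finset.univ.erase i, (-lo) ≤ ∑ j ∈ Finset.univ.erase i, w j :=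
      Finset.sum_le_sum (fun j _ => hlo j)
    have h5 : ∑ j ∈ Finset.univ.erase i, (-lo) = ((Finset.univ.erase i).card : ℝ) * (-lo) := by
      rw [Finset.sum_const, nsmul_eq_mul]
    rw [h5] at h4
    nlinarith
  linarith

variable {p0 p1 p2 p3 p4 : ℕ}
  (b : Fin p3 → ℤ) (c : Fin (p2 - 1) → ℤ) (d e f : ℤ)

local notation "Col" => BCol p0 p1 p2 p3 p4
local notation "AA" => batyrevA p0 p1 p2 p3 p4 b c
local notation "hh" => batyrevH p0 p1 p2 p3 p4 d e f

lemma batyrev_bounded (hp1 : 1 ≤ p1) (hp2 : 1 ≤ p2) (hp4 : 1 ≤ p4)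
    (hb : ∀ i, 0 ≤ b i) (hc : ∀ k, 0 ≤ c k)
    (hd : 0 ≤ d) (he : 0 ≤ e) (hf : 0 ≤ f) :
    Bornology.IsBounded (polyP AA hh) := by
  classical
  rw [isBounded_iff_forall_norm_le]
  set Bt : ℝ := (e : ℝ) + (f : ℝ) with hBt
  have hBt0 : 0 ≤ Bt := by
    have : (0:ℝ) ≤ (e:ℝ) := by exact_mod_cast he
    have : (0:ℝ) ≤ (f:ℝ) := by exact_mod_cast hf
    rw [hBt]; positivity
  set Sb : ℝ := ∑ i, (b i : ℝ) with hSb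
  set Sc : ℝ := ∑ k, (c k : ℝ) with hSc
  have hSb0 : 0 ≤ Sb := Finset.sum_nonneg fun i _ => by exact_mod_cast hb i
  have hSc0 : 0 ≤ Sc := Finset.sum_nonneg fun k _ => by exact_mod_cast hc k
  have hf0 : (0:ℝ) ≤ (f:ℝ) := by exact_mod_cast hf
  have hd0 : (0:ℝ) ≤ (d:ℝ) := by exact_mod_cast hd
  set RAmax : ℝ := (f : ℝ) + Sb * Bt + Sc * Bt with hRAmax
  set RBmax : ℝ := (Sb + (p3 : ℝ)) * Bt + Sc * Bt with hRBmax
  have hRAmax0 : 0 ≤ RAmax := by rw [hRAmax]; positivity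
  have hRBmax0 : 0 ≤ RBmax := by rw [hRBmax]; positivity
  set C : ℝ := RAmax + RBmax + ((p0 : ℝ) + 1) * (d : ℝ) + Bt with hCdef
  have hC0 : 0 ≤ C := by rw [hCdef]; positivity
  refine ⟨C, fun x hx => ?_⟩
  obtain ⟨hv, hu, hy, ht, hz, hA, hB, hC2⟩ := mem_polyP_batyrev b c d e f hp1 hp2 hp4 x hx
  -- bounds on t and z coordinates
  have hSZ0 : 0 ≤ ∑ k, x (zcol k) := Finset.sum_nonneg fun k _ => hz k
  have hST0 : 0 ≤ ∑ i, x (tcol i) := Finset.sum_nonneg fun i _ => ht i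
  have hCef : ((e + f : ℤ) : ℝ) = Bt := by rw [hBt]; push_cast; ring
  have htB : ∀ i, x (tcol i) ≤ Bt := by
    intro i
    have h1 : x (tcol i) ≤ ∑ i', x (tcol i') :=
      Finset.single_le_sum (fun i' _ => ht i') (Finset.mem_univ i)
    rw [hCef] at hC2
    linarith
  have hzB : ∀ k, x (zcol k) ≤ Bt := by
    intro k
    have h1 : x (zcol k) ≤ ∑ k', x (zcol k') :=
      Finset.single_le_sum (fun k' _ => hz k') (Finset.mem_univ k)
    rw [hCef] at hC2
    linarith
  -- bounds on the right-hand sides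
  have hRA : (f : ℝ) + (∑ i, (b i : ℝ) * x (tcol i)) + (∑ k, (c k : ℝ) * x (zcol k))
      ≤ RAmax := by
    have h1 : ∑ i, (b i : ℝ) * x (tcol i) ≤ ∑ i, (b i : ℝ) * Bt :=
      Finset.sum_le_sum fun i _ => mul_le_mul_of_nonneg_left (htB i)
        (by exact_mod_cast hb i)
    have h2 : ∑ k, (c k : ℝ) * x (zcol k) ≤ ∑ k, (c k : ℝ) * Bt :=
      Finset.sum_le_sum fun k _ => mul_le_mul_of_nonneg_left (hzB k)
        (by exact_mod_cast hc k)
    rw [← Finset.sum_mul] at h1 h2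
    rw [hRAmax, hSb, hSc]
    linarith
  have hRB : (∑ i, ((b i : ℝ) + 1) * x (tcol i)) + (∑ k, (c k : ℝ) * x (zcol k))
      ≤ RBmax := by
    have h1 : ∑ i, ((b i : ℝ) + 1) * x (tcol i) ≤ ∑ i, ((b i : ℝ) + 1) * Bt :=
      Finset.sum_le_sum fun i _ => mul_le_mul_of_nonneg_left (htB i)
        (by
          have h0 : (0:ℝ) ≤ (b i : ℝ) := by exact_mod_cast hb i
          linarith)
    have h2 : ∑ k, (c k : ℝ) * x (zcol k) ≤ ∑ k, (c k : ℝ) * Bt :=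
      Finset.sum_le_sum fun k _ => mul_le_mul_of_nonneg_left (hzB k)
        (by exact_mod_cast hc k)
    have h3 : ∑ i, ((b i : ℝ) + 1) * Bt = (Sb + (p3 : ℝ)) * Bt := by
      rw [hSb, ← Finset.sum_mul]
      congr 1
      rw [Finset.sum_add_distrib]
      simp
    rw [← Finset.sum_mul] at h2
    rw [h3] at h1
    rw [hRBmax, hSc]
    linarith
  -- lower bounds for v coordinates
  have hvlb : ∀ i, -(d : ℝ) ≤ x (vcol i) := by
    intro i
    have := hv i
    split_ifs at this with h0
    · simpa using this
    · simp at this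
      linarith
  have hSU0 : 0 ≤ ∑ a, x (ucol a) := Finset.sum_nonneg fun a _ => hu a
  have hSY0 : 0 ≤ ∑ a, x (ycol a) := Finset.sum_nonneg fun a _ => hy a
  have hSVlb : -((p0 : ℝ) * (d : ℝ)) ≤ ∑ i, x (vcol i) := by
    have h1 : ∑ i, (-(d:ℝ)) ≤ ∑ i, x (vcol i) := Finset.sum_le_sum fun i _ => hvlb i
    have h2 : ∑ (_i : Fin p0), (-(d:ℝ)) = (p0 : ℝ) * (-(d:ℝ)) := by
      rw [Finset.sum_const, nsmul_eq_mul]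
      simp
    rw [h2] at h1
    linarith
  have hexp : ((p0 : ℝ) + 1) * (d : ℝ) = (p0 : ℝ) * (d : ℝ) + (d : ℝ) := by ring
  have hp0d : (0:ℝ) ≤ (p0 : ℝ) * (d : ℝ) := by positivity
  -- now bound each coordinate
  have hbound : ∀ col : Col, |x col| ≤ C := by
    intro col
    rw [abs_le]
    rcases col with co | co
    · rcases co with i | co
      · -- v coordinate
        show -C ≤ x (vcol i) ∧ x (vcol i) ≤ C
        have hup : x (vcol i) ≤ RAmax + (p0 : ℝ) * (d : ℝ) := by
          have hsum : ∑ i', x (vcol i') ≤ RAmax := by linarith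
          have := coord_le_of_sum (fun i' => x (vcol i')) (d : ℝ)
            (fun i' => hvlb i') hd0 RAmax hsum i
          linarith [this]
        exact ⟨by linarith [hvlb i, hCdef, hexp, hp0d, hRAmax0, hRBmax0, hBt0],
          by linarith [hup, hCdef, hexp, hd0, hBt0, hRBmax0]⟩
      · rcases co with a | a
        · -- u coordinate
          show -C ≤ x (ucol a) ∧ x (ucol a) ≤ C
          have h1 : x (ucol a) ≤ ∑ a', x (ucol a') :=
            Finset.single_le_sum (fun a' _ => hu a') (Finset.mem_univ a)
          have hup : x (ucol a) ≤ RAmax + (p0 : ℝ) * (d : ℝ) := by linarith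
          exact ⟨by linarith [hu a, hC0],
            by linarith [hup, hCdef, hexp, hd0, hBt0, hRBmax0]⟩
        · -- y coordinate
          show -C ≤ x (ycol a) ∧ x (ycol a) ≤ C
          have h1 : x (ycol a) ≤ ∑ a', x (ycol a') :=
            Finset.single_le_sum (fun a' _ => hy a') (Finset.mem_univ a)
          have hup : x (ycol a) ≤ RBmax + (p0 : ℝ) * (d : ℝ) := by linarith
          exact ⟨by linarith [hy a, hC0],
            by linarith [hup, hCdef, hexp, hd0, hBt0, hRAmax0]⟩
    · rcases co with i | k
      · show -C ≤ x (tcol i) ∧ x (tcol i) ≤ C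
        exact ⟨by linarith [ht i, hC0],
          by linarith [htB i, hCdef, hexp, hp0d, hd0, hRAmax0, hRBmax0]⟩
      · show -C ≤ x (zcol k) ∧ x (zcol k) ≤ C
        exact ⟨by linarith [hz k, hC0],
          by linarith [hzB k, hCdef, hexp, hp0d, hd0, hRAmax0, hRBmax0]⟩
  rw [pi_norm_le_iff_of_nonneg hC0]
  intro col
  rw [Real.norm_eq_abs]
  exact hbound col

end Bounded
/-- The Batyrev polytope `P(A, h(d,e,f))` (with `d,e,f ≥ 0`)
is a lattice polytope: it is bounded and equals the convex hull of its set of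
integer points. -/
theorem batyrev_lattice_polytope (p0 p1 p2 p3 p4 : ℕ)
    (hp0 : 1 ≤ p0) (hp1 : 1 ≤ p1) (hp2 : 1 ≤ p2) (hp3 : 1 ≤ p3) (hp4 : 1 ≤ p4)
    (b : Fin p3 → ℤ) (c : Fin (p2 - 1) → ℤ)
    (hb : ∀ i, 0 ≤ b i) (hc : ∀ k, 0 ≤ c k)
    (d e f : ℤ) (hd : 0 ≤ d) (he : 0 ≤ e) (hf : 0 ≤ f) :
    Bornology.IsBounded
      (polyP (batyrevA p0 p1 p2 p3 p4 b c) (batyrevH p0 p1 p2 p3 p4 d e f)) ∧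
    polyP (batyrevA p0 p1 p2 p3 p4 b c) (batyrevH p0 p1 p2 p3 p4 d e f) =
      convexHull ℝ
        (polyP (batyrevA p0 p1 p2 p3 p4 b c) (batyrevH p0 p1 p2 p3 p4 d e f) ∩ intZ) := by
  classical
  set P : Set (BCol p0 p1 p2 p3 p4 → ℝ) :=
    polyP (batyrevA p0 p1 p2 p3 p4 b c) (batyrevH p0 p1 p2 p3 p4 d e f) with hPdef
  have hconv : Convex ℝ P := polyP_convex _ _
  have hclosed : IsClosed P := polyP_closed _ _
  have hbdd : Bornology.IsBounded P := batyrev_bounded b c d e f hp1 hp2 hp4 hb hc hd he hf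
  refine ⟨hbdd, ?_⟩
  have hcomp : IsCompact P := Metric.isCompact_of_isClosed_isBounded hclosed hbdd
  -- finiteness of P ∩ intZ
  obtain ⟨C, hC⟩ := isBounded_iff_forall_norm_le.1 hbdd
  set N : ℕ := ⌈C⌉₊ with hN
  have hfin : (P ∩ intZ).Finite := by
    have h2 : (Set.pi Set.univ (fun _ : BCol p0 p1 p2 p3 p4 =>
        Set.Icc (-(N : ℤ)) (N : ℤ))).Finite :=
      Set.Finite.pi (fun _ => Set.finite_Icc _ _)
    refine Set.Finite.subset (h2.image (fun (k : BCol p0 p1 p2 p3 p4 → ℤ) =>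
      (fun j => (k j : ℝ)))) ?_
    rintro x ⟨hxP, hxZ⟩
    choose k hk using hxZ
    refine ⟨k, ?_, ?_⟩
    · intro j _
      rw [Set.mem_Icc]
      have h3 : |x j| ≤ C := by
        have := norm_le_pi_norm x j
        have h4 := hC x hxP
        rw [Real.norm_eq_abs] at this
        linarith
      rw [hk j] at h3
      have h5 : C ≤ (N : ℝ) := Nat.le_ceil C
      have h6 : |((k j : ℤ) : ℝ)| ≤ ((N : ℤ) : ℝ) := by
        push_cast
        linarith
      rw [abs_le] at h6
      constructor
      · exact_mod_cast h6.1
      · exact_mod_cast h6.2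
    · funext j
      exact (hk j).symm
  have hext : P.extremePoints ℝ ⊆ P ∩ intZ := fun x hx =>
    ⟨hx.1, batyrev_extreme_intZ b c d e f hp1 hp2 hp4 hb hc hd hf x hx⟩
  apply Set.Subset.antisymm
  · calc P = closure (convexHull ℝ (P.extremePoints ℝ)) :=
        (closure_convexHull_extremePoints hcomp hconv).symm
      _ ⊆ closure (convexHull ℝ (P ∩ intZ)) := closure_mono (convexHull_mono hext)
      _ = convexHull ℝ (P ∩ intZ) := (hfin.isClosed_convexHull ℝ).closure_eq
  · exact convexHull_min Set.inter_subset_left hconv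
end

section
/- Let n = p0+p1+p2+p3+p4-3, let A be the Batyrev matrix determined by integers p0,p1,p2,p3,p4 ≥ 1 and nonnegative integers b_1,…,b_{p3}, c_2,…,c_{p2}, and let d,e,f be nonnegative integers with normalized height vector h = h(d,e,f). For every α ∈ ℤ^J with α_j ≥ 0 for all j ∈ J and Σ_{j∈J} α_j ≤ e+f, the slice of P(A,h) at α, namely {y ∈ ℝ^S : (y, α) ∈ P(A,h)} (identifying ℝ^n = ℝ^S × ℝ^J), is a lattice polytope: it equals the convex hull (over ℝ) of its set of points in ℤ^S. -/
open Finset Pointwise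

section AuxLemmas


lemma ceil_sub_ceil_le (lam p q : ℝ) (M : ℤ) (h : p ≤ q + M) :
    (⌈p - lam⌉ : ℝ) - ⌈q - lam⌉ ≤ M := by
  have h1 : ⌈p - lam⌉ ≤ ⌈q - lam⌉ + M := by
    rw [← Int.ceil_add_intCast]; exact Int.ceil_le_ceil (by linarith)
  have h2 : ((⌈p - lam⌉ : ℤ) : ℝ) ≤ ((⌈q - lam⌉ + M : ℤ) : ℝ) := by exact_mod_cast h1
  push_cast at h2; linarith

lemma ceil_sub_ceil_ge (lam p q : ℝ) (m : ℤ) (h : q + m ≤ p) :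
    (m : ℝ) ≤ (⌈p - lam⌉ : ℝ) - ⌈q - lam⌉ := by
  have h1 : ⌈q - lam⌉ + m ≤ ⌈p - lam⌉ := by
    rw [← Int.ceil_add_intCast]; exact Int.ceil_le_ceil (by linarith)
  have h2 : ((⌈q - lam⌉ + m : ℤ) : ℝ) ≤ ((⌈p - lam⌉ : ℤ) : ℝ) := by exact_mod_cast h1
  push_cast at h2; linarith

lemma ceil_sub_ceil_bounds (lam p q : ℝ) :
    p - q - 1 ≤ (⌈p - lam⌉ : ℝ) - ⌈q - lam⌉ ∧ (⌈p - lam⌉ : ℝ) - ⌈q - lam⌉ ≤ p - q + 1 := by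
  have := Int.le_ceil (p - lam); have := Int.ceil_lt_add_one (p - lam)
  have := Int.le_ceil (q - lam); have := Int.ceil_lt_add_one (q - lam)
  constructor <;> linarith

lemma ceil_sub_eq (t lam : ℝ) (h0 : 0 < lam) (h1 : lam < 1) :
    (⌈t - lam⌉ : ℤ) = ⌊t⌋ + (if lam < Int.fract t then 1 else 0) := by
  have hf0 : 0 ≤ Int.fract t := Int.fract_nonneg t
  have hf1 : Int.fract t < 1 := Int.fract_lt_one t
  have ht : t - lam = (Int.fract t - lam) + (⌊t⌋ : ℝ) := by
    have := Int.fract_add_floor t; linarith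
  rw [ht, Int.ceil_add_intCast]
  split_ifs with h
  · have h2 : ⌈Int.fract t - lam⌉ = 1 := by
      rw [Int.ceil_eq_iff]; constructor <;> push_cast <;> linarith
    omega
  · have h2 : ⌈Int.fract t - lam⌉ = 0 := by
      rw [Int.ceil_eq_iff]
      constructor <;> push_cast <;> linarith
    omega

lemma avg_ceil_bound (t : ℝ) (M : ℕ) :
    |((M : ℝ)+1)⁻¹ * ∑ i ∈ Finset.range (M+1),
      ((⌈t - (2*(i:ℝ)+1)/(2*((M:ℝ)+1))⌉ : ℤ) : ℝ) - t| ≤ ((M : ℝ)+1)⁻¹ := by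
  set θ : ℝ := Int.fract t with hθ
  have hθ0 : 0 ≤ θ := Int.fract_nonneg t
  have hθ1 : θ < 1 := Int.fract_lt_one t
  have hN : (0:ℝ) < (M:ℝ)+1 := by positivity
  set K : ℤ := ⌈θ * ((M:ℝ)+1) - 1/2⌉ with hK
  have hterm : ∀ i ∈ Finset.range (M+1),
      ((⌈t - (2*(i:ℝ)+1)/(2*((M:ℝ)+1))⌉ : ℤ) : ℝ)
        = (⌊t⌋ : ℝ) + (if ((i:ℤ) < K) then 1 else 0) := by
    intro i hi
    rw [Finset.mem_range] at hi
    have hiM : (i:ℝ) ≤ (M:ℝ) := by exact_mod_cast Nat.lt_succ_iff.mp hi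
    have hlam0 : 0 < (2*(i:ℝ)+1)/(2*((M:ℝ)+1)) := by positivity
    have hlam1 : (2*(i:ℝ)+1)/(2*((M:ℝ)+1)) < 1 := by
      rw [div_lt_one (by positivity)]; linarith
    rw [ceil_sub_eq t _ hlam0 hlam1]
    have hcond : ((2*(i:ℝ)+1)/(2*((M:ℝ)+1)) < θ) ↔ ((i:ℤ) < K) := by
      rw [div_lt_iff₀ (by positivity), hK, Int.lt_ceil]
      push_cast
      constructor <;> intro h <;> linarith
    rw [← hθ]
    push_cast
    simp only [hcond]
  rw [Finset.sum_congr rfl hterm, Finset.sum_add_distrib, Finset.sum_const, Finset.card_range]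
  have hsum : (∑ i ∈ Finset.range (M+1), (if ((i:ℤ) < K) then (1:ℝ) else 0))
      = (((Finset.range (M+1)).filter (fun i : ℕ => ((i:ℤ) < K))).card : ℝ) := by
    rw [Finset.sum_boole]
  have hfilter : (Finset.range (M+1)).filter (fun i : ℕ => ((i:ℤ) < K))
      = Finset.range (min (M+1) K.toNat) := by
    ext i
    simp only [Finset.mem_filter, Finset.mem_range, lt_min_iff]
    omega
  rw [hsum, hfilter, Finset.card_range]
  have hKle : θ * ((M:ℝ)+1) - 1/2 ≤ (K:ℝ) := Int.le_ceil _
  have hKlt : (K:ℝ) < θ * ((M:ℝ)+1) + 1/2 := by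
    have := Int.ceil_lt_add_one (θ * ((M:ℝ)+1) - 1/2); linarith
  have hKM : K ≤ (M:ℤ)+1 := by
    rw [hK, Int.ceil_le]; push_cast; nlinarith
  set C : ℝ := ((min (M+1) K.toNat : ℕ) : ℝ) with hC
  have hcount : |C - θ * ((M:ℝ)+1)| ≤ 1/2 := by
    rcases le_or_gt K 0 with hK0 | hK0
    · have h0' : K.toNat = 0 := Int.toNat_of_nonpos hK0
      have hc : min (M+1) K.toNat = 0 := by omega
      have hKR : (K:ℝ) ≤ 0 := by exact_mod_cast hK0
      rw [hC, hc, abs_le]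
      constructor <;> push_cast <;> nlinarith
    · have hc : min (M+1) K.toNat = K.toNat := by omega
      have hcast : ((K.toNat : ℕ) : ℝ) = (K : ℝ) := by
        have := Int.toNat_of_nonneg (le_of_lt hK0); exact_mod_cast this
      rw [hC, hc, hcast, abs_le]
      constructor <;> linarith
  have hflo : t = (⌊t⌋ : ℝ) + θ := by rw [hθ]; have := Int.fract_add_floor t; linarith
  have hkey : ((M:ℝ)+1)⁻¹ * ((M+1 : ℕ) • (⌊t⌋:ℝ) + C) - t
      = ((M:ℝ)+1)⁻¹ * (C - θ*((M:ℝ)+1)) := by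
    have hn : (((M+1 : ℕ)) : ℝ) = (M:ℝ)+1 := by push_cast; ring
    have h1 : ((M:ℝ)+1)⁻¹ * (((M:ℝ)+1) * (⌊t⌋:ℝ)) = (⌊t⌋:ℝ) := by field_simp
    have h2 : ((M:ℝ)+1)⁻¹ * (θ*((M:ℝ)+1)) = θ := by field_simp
    rw [nsmul_eq_mul, hn, mul_add, mul_sub, h1, h2]
    linarith [hflo]
  rw [hkey, abs_mul, abs_of_pos (by positivity : (0:ℝ) < ((M:ℝ)+1)⁻¹)]
  have hN2 : (0:ℝ) < ((M:ℝ)+1)⁻¹ := by positivity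
  nlinarith [hcount, hN2]

lemma avg_ceil_tendsto (t : ℝ) :
    Filter.Tendsto (fun M : ℕ => ((M : ℝ)+1)⁻¹ * ∑ i ∈ Finset.range (M+1),
      ((⌈t - (2*(i:ℝ)+1)/(2*((M:ℝ)+1))⌉ : ℤ) : ℝ)) Filter.atTop (nhds t) := by
  have h0 : Filter.Tendsto (fun M : ℕ => ((M : ℝ)+1)⁻¹) Filter.atTop (nhds 0) := by
    simpa [one_div] using tendsto_one_div_add_atTop_nhds_zero_nat (𝕜 := ℝ)
  have hlo : Filter.Tendsto (fun M : ℕ => t - ((M : ℝ)+1)⁻¹) Filter.atTop (nhds t) := by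
    simpa using tendsto_const_nhds.sub h0
  have hhi : Filter.Tendsto (fun M : ℕ => t + ((M : ℝ)+1)⁻¹) Filter.atTop (nhds t) := by
    simpa using tendsto_const_nhds.add h0
  apply tendsto_of_tendsto_of_tendsto_of_le_of_le hlo hhi
  · intro M
    have := (abs_le.mp (avg_ceil_bound t M)).1
    linarith
  · intro M
    have := (abs_le.mp (avg_ceil_bound t M)).2
    linarith

lemma avg_pair_tendsto (p q : ℝ) :
    Filter.Tendsto (fun M : ℕ => ∑ i ∈ Finset.range (M+1), ((M : ℝ)+1)⁻¹ *
      (((⌈p - (2*(i:ℝ)+1)/(2*((M:ℝ)+1))⌉ : ℤ) : ℝ) - ((⌈q - (2*(i:ℝ)+1)/(2*((M:ℝ)+1))⌉ : ℤ) : ℝ)))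
      Filter.atTop (nhds (p - q)) := by
  have h := (avg_ceil_tendsto p).sub (avg_ceil_tendsto q)
  apply h.congr
  intro M
  rw [Finset.mul_sum, Finset.mul_sum, ← Finset.sum_sub_distrib]
  exact Finset.sum_congr rfl (fun i _ => (mul_sub _ _ _).symm)

lemma key_lattice (a b c : ℕ) (L : (Fin a ⊕ (Fin b ⊕ Fin c)) → ℤ) (F G : ℤ) :
    {y : (Fin a ⊕ (Fin b ⊕ Fin c)) → ℝ | (∀ s, (L s : ℝ) ≤ y s) ∧
        ((∑ i, y (.inl i)) + ∑ j, y (.inr (.inl j)) ≤ (F:ℝ)) ∧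
        ((∑ i, y (.inl i)) + ∑ k, y (.inr (.inr k)) ≤ (G:ℝ))} =
      convexHull ℝ
        ({y : (Fin a ⊕ (Fin b ⊕ Fin c)) → ℝ | (∀ s, (L s : ℝ) ≤ y s) ∧
            ((∑ i, y (.inl i)) + ∑ j, y (.inr (.inl j)) ≤ (F:ℝ)) ∧
            ((∑ i, y (.inl i)) + ∑ k, y (.inr (.inr k)) ≤ (G:ℝ))} ∩ intZ) := by
  classical
  set Q : Set ((Fin a ⊕ (Fin b ⊕ Fin c)) → ℝ) :=
    {y | (∀ s, (L s : ℝ) ≤ y s) ∧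
        ((∑ i, y (.inl i)) + ∑ j, y (.inr (.inl j)) ≤ (F:ℝ)) ∧
        ((∑ i, y (.inl i)) + ∑ k, y (.inr (.inr k)) ≤ (G:ℝ))} with hQ
  have hQconv : Convex ℝ Q := by
    intro y1 hy1 y2 hy2 s t hs ht hst
    obtain ⟨hL1, hF1, hG1⟩ := hy1
    obtain ⟨hL2, hF2, hG2⟩ := hy2
    refine ⟨fun κ => ?_, ?_, ?_⟩
    · have h1 := hL1 κ; have h2 := hL2 κ
      simp only [Pi.add_apply, Pi.smul_apply, smul_eq_mul]
      have e : s * (L κ:ℝ) + t * (L κ:ℝ) = (L κ:ℝ) := by rw [← add_mul, hst, one_mul]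
      linarith [mul_le_mul_of_nonneg_left h1 hs, mul_le_mul_of_nonneg_left h2 ht]
    · simp only [Pi.add_apply, Pi.smul_apply, smul_eq_mul, Finset.sum_add_distrib,
        ← Finset.mul_sum]
      have e : s * (F:ℝ) + t * (F:ℝ) = (F:ℝ) := by rw [← add_mul, hst, one_mul]
      linarith [mul_le_mul_of_nonneg_left hF1 hs, mul_le_mul_of_nonneg_left hF2 ht]
    · simp only [Pi.add_apply, Pi.smul_apply, smul_eq_mul, Finset.sum_add_distrib,
        ← Finset.mul_sum]
      have e : s * (G:ℝ) + t * (G:ℝ) = (G:ℝ) := by rw [← add_mul, hst, one_mul]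
      linarith [mul_le_mul_of_nonneg_left hG1 hs, mul_le_mul_of_nonneg_left hG2 ht]
  apply Set.Subset.antisymm ?_ (convexHull_min Set.inter_subset_left hQconv)
  intro x hx
  obtain ⟨hL, hF, hG⟩ := hx
  set xv : ℕ → ℝ := fun n => if h : n < a then x (.inl ⟨n, h⟩) else 0 with hxv
  set xu : ℕ → ℝ := fun n => if h : n < b then x (.inr (.inl ⟨n, h⟩)) else 0 with hxu
  set xw : ℕ → ℝ := fun n => if h : n < c then x (.inr (.inr ⟨n, h⟩)) else 0 with hxw
  set CU : ℕ → ℝ := fun n => ∑ j ∈ Finset.range n, xu j with hCU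
  set CV : ℕ → ℝ := fun n => CU b + ∑ i ∈ Finset.range n, xv i with hCV
  set CW : ℕ → ℝ := fun n => CV a + ∑ k ∈ Finset.range n, xw k with hCW
  have hCU0 : CU 0 = 0 := by simp [hCU]
  have hCV0 : CV 0 = CU b := by simp [hCV]
  have hCW0 : CW 0 = CV a := by simp [hCW]
  have hxva : ∀ i : Fin a, CV ((i:ℕ)+1) - CV (i:ℕ) = x (.inl i) := by
    intro i
    rw [hCV]
    simp only [Finset.sum_range_succ]
    rw [hxv]
    simp only [i.isLt, dif_pos, Fin.eta]
    ring
  have hxub : ∀ j : Fin b, CU ((j:ℕ)+1) - CU (j:ℕ) = x (.inr (.inl j)) := by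
    intro j
    rw [hCU]
    simp only [Finset.sum_range_succ]
    rw [hxu]
    simp only [j.isLt, dif_pos, Fin.eta]
    ring
  have hxwc : ∀ k : Fin c, CW ((k:ℕ)+1) - CW (k:ℕ) = x (.inr (.inr k)) := by
    intro k
    rw [hCW]
    simp only [Finset.sum_range_succ]
    rw [hxw]
    simp only [k.isLt, dif_pos, Fin.eta]
    ring
  have hSu : ∑ j : Fin b, x (.inr (.inl j)) = CU b := by
    have h1 : ∑ j : Fin b, x (.inr (.inl j)) = ∑ j ∈ Finset.range b, xu j := by
      rw [← Fin.sum_univ_eq_sum_range (fun n => xu n) b]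
      exact Finset.sum_congr rfl (fun j _ => by rw [hxu]; simp [j.isLt])
    have h2 : CU b = ∑ j ∈ Finset.range b, xu j := rfl
    rw [h1, h2]
  have hSv : ∑ i : Fin a, x (.inl i) = CV a - CU b := by
    have h1 : ∑ i : Fin a, x (.inl i) = ∑ i ∈ Finset.range a, xv i := by
      rw [← Fin.sum_univ_eq_sum_range (fun n => xv n) a]
      exact Finset.sum_congr rfl (fun i _ => by rw [hxv]; simp [i.isLt])
    have h2 : CV a = CU b + ∑ i ∈ Finset.range a, xv i := rfl
    rw [h1, h2]; ring
  have hSw : ∑ k : Fin c, x (.inr (.inr k)) = CW c - CV a := by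
    have h1 : ∑ k : Fin c, x (.inr (.inr k)) = ∑ k ∈ Finset.range c, xw k := by
      rw [← Fin.sum_univ_eq_sum_range (fun n => xw n) c]
      exact Finset.sum_congr rfl (fun k _ => by rw [hxw]; simp [k.isLt])
    have h2 : CW c = CV a + ∑ k ∈ Finset.range c, xw k := rfl
    rw [h1, h2]; ring
  set r : ℝ → (Fin a ⊕ (Fin b ⊕ Fin c)) → ℝ := fun lam => Sum.elim
    (fun i : Fin a => ((⌈CV ((i:ℕ)+1) - lam⌉ - ⌈CV (i:ℕ) - lam⌉ : ℤ) : ℝ))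
    (Sum.elim
      (fun j : Fin b => ((⌈CU ((j:ℕ)+1) - lam⌉ - ⌈CU (j:ℕ) - lam⌉ : ℤ) : ℝ))
      (fun k : Fin c => ((⌈CW ((k:ℕ)+1) - lam⌉ - ⌈CW (k:ℕ) - lam⌉ : ℤ) : ℝ))) with hr
  have hrv : ∀ lam, ∑ i : Fin a, r lam (.inl i)
      = ((⌈CV a - lam⌉ : ℤ) : ℝ) - ((⌈CV 0 - lam⌉ : ℤ) : ℝ) := by
    intro lam
    rw [hr]
    simp only [Sum.elim_inl, Int.cast_sub]
    rw [Fin.sum_univ_eq_sum_range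
      (fun n => ((⌈CV (n+1) - lam⌉ : ℤ) : ℝ) - ((⌈CV n - lam⌉ : ℤ) : ℝ)) a]
    exact Finset.sum_range_sub (fun n => ((⌈CV n - lam⌉ : ℤ) : ℝ)) a
  have hru : ∀ lam, ∑ j : Fin b, r lam (.inr (.inl j))
      = ((⌈CU b - lam⌉ : ℤ) : ℝ) - ((⌈CU 0 - lam⌉ : ℤ) : ℝ) := by
    intro lam
    rw [hr]
    simp only [Sum.elim_inr, Sum.elim_inl, Int.cast_sub]
    rw [Fin.sum_univ_eq_sum_range
      (fun n => ((⌈CU (n+1) - lam⌉ : ℤ) : ℝ) - ((⌈CU n - lam⌉ : ℤ) : ℝ)) b]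
    exact Finset.sum_range_sub (fun n => ((⌈CU n - lam⌉ : ℤ) : ℝ)) b
  have hrw : ∀ lam, ∑ k : Fin c, r lam (.inr (.inr k))
      = ((⌈CW c - lam⌉ : ℤ) : ℝ) - ((⌈CW 0 - lam⌉ : ℤ) : ℝ) := by
    intro lam
    rw [hr]
    simp only [Sum.elim_inr, Int.cast_sub]
    rw [Fin.sum_univ_eq_sum_range
      (fun n => ((⌈CW (n+1) - lam⌉ : ℤ) : ℝ) - ((⌈CW n - lam⌉ : ℤ) : ℝ)) c]
    exact Finset.sum_range_sub (fun n => ((⌈CW n - lam⌉ : ℤ) : ℝ)) c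
  have hrQ : ∀ lam, r lam ∈ Q := by
    intro lam
    refine ⟨?_, ?_, ?_⟩
    · rintro (i | j | k)
      · have h2 : CV (i:ℕ) + (L (.inl i) : ℝ) ≤ CV ((i:ℕ)+1) := by
          have := hL (.inl i); have := hxva i; linarith
        have h3 := ceil_sub_ceil_ge lam _ _ (L (.inl i)) h2
        rw [hr]; simp only [Sum.elim_inl]; push_cast at h3 ⊢; linarith
      · have h2 : CU (j:ℕ) + (L (.inr (.inl j)) : ℝ) ≤ CU ((j:ℕ)+1) := by
          have := hL (.inr (.inl j)); have := hxub j; linarith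
        have h3 := ceil_sub_ceil_ge lam _ _ (L (.inr (.inl j))) h2
        rw [hr]; simp only [Sum.elim_inr, Sum.elim_inl]; push_cast at h3 ⊢; linarith
      · have h2 : CW (k:ℕ) + (L (.inr (.inr k)) : ℝ) ≤ CW ((k:ℕ)+1) := by
          have := hL (.inr (.inr k)); have := hxwc k; linarith
        have h3 := ceil_sub_ceil_ge lam _ _ (L (.inr (.inr k))) h2
        rw [hr]; simp only [Sum.elim_inr]; push_cast at h3 ⊢; linarith
    · rw [hrv lam, hru lam, hCV0]
      have hbound : CV a ≤ CU 0 + (F:ℝ) := by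
        rw [hSv, hSu] at hF; rw [hCU0]; linarith
      have := ceil_sub_ceil_le lam (CV a) (CU 0) F hbound
      linarith
    · rw [hrv lam, hrw lam, hCV0, hCW0]
      have hbound : CW c ≤ CU b + (G:ℝ) := by
        rw [hSv, hSw] at hG; linarith
      have := ceil_sub_ceil_le lam (CW c) (CU b) G hbound
      linarith
  have hrZ : ∀ lam, r lam ∈ intZ := by
    intro lam
    rintro (i | j | k)
    · exact ⟨_, rfl⟩
    · exact ⟨_, rfl⟩
    · exact ⟨_, rfl⟩
  have hrbox : ∀ lam s, x s - 1 ≤ r lam s ∧ r lam s ≤ x s + 1 := by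
    intro lam s
    rcases s with i | j | k
    · have h1 := ceil_sub_ceil_bounds lam (CV ((i:ℕ)+1)) (CV (i:ℕ))
      have h2 := hxva i
      rw [hr]; simp only [Sum.elim_inl]; push_cast
      constructor <;> linarith [h1.1, h1.2]
    · have h1 := ceil_sub_ceil_bounds lam (CU ((j:ℕ)+1)) (CU (j:ℕ))
      have h2 := hxub j
      rw [hr]; simp only [Sum.elim_inr, Sum.elim_inl]; push_cast
      constructor <;> linarith [h1.1, h1.2]
    · have h1 := ceil_sub_ceil_bounds lam (CW ((k:ℕ)+1)) (CW (k:ℕ))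
      have h2 := hxwc k
      rw [hr]; simp only [Sum.elim_inr]; push_cast
      constructor <;> linarith [h1.1, h1.2]
  set B : Set ((Fin a ⊕ (Fin b ⊕ Fin c)) → ℝ) :=
    Set.pi Set.univ (fun s => (fun k : ℤ => (k:ℝ)) '' (Set.Icc (⌊x s⌋ - 1) (⌊x s⌋ + 2))) with hB
  have hrB : ∀ lam, r lam ∈ B := by
    intro lam s _
    obtain ⟨k, hk⟩ := hrZ lam s
    refine ⟨k, ?_, hk.symm⟩
    obtain ⟨hb1, hb2⟩ := hrbox lam s
    rw [hk] at hb1 hb2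
    have hfl1 : ((⌊x s⌋:ℤ):ℝ) ≤ x s := Int.floor_le _
    have hfl2 : x s < ((⌊x s⌋:ℤ):ℝ) + 1 := Int.lt_floor_add_one _
    constructor
    · have h : ((⌊x s⌋ - 1 : ℤ):ℝ) ≤ (k:ℝ) := by push_cast; linarith
      exact_mod_cast h
    · have h : (k:ℝ) ≤ ((⌊x s⌋ + 2 : ℤ):ℝ) := by push_cast; linarith
      exact_mod_cast h
  have hBfin : B.Finite := Set.Finite.pi (fun s => (Set.finite_Icc _ _).image _)
  have hWfin : ((Q ∩ intZ) ∩ B).Finite := hBfin.subset Set.inter_subset_right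
  have hrW : ∀ lam, r lam ∈ (Q ∩ intZ) ∩ B := fun lam => ⟨⟨hrQ lam, hrZ lam⟩, hrB lam⟩
  set seq : ℕ → (Fin a ⊕ (Fin b ⊕ Fin c)) → ℝ := fun M =>
    ∑ i ∈ Finset.range (M+1), (((M:ℝ)+1)⁻¹) • r ((2*(i:ℝ)+1)/(2*((M:ℝ)+1))) with hseq
  have hseqW : ∀ M, seq M ∈ convexHull ℝ ((Q ∩ intZ) ∩ B) := by
    intro M
    apply Convex.sum_mem (convex_convexHull ℝ _)
    · intro i _; positivity
    · rw [Finset.sum_const, Finset.card_range, nsmul_eq_mul]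
      have : ((M:ℝ)+1) ≠ 0 := by positivity
      push_cast
      field_simp
    · intro i _; exact subset_convexHull ℝ _ (hrW _)
  have htend : Filter.Tendsto seq Filter.atTop (nhds x) := by
    rw [tendsto_pi_nhds]
    intro s
    have happ : ∀ M, seq M s = ∑ i ∈ Finset.range (M+1),
        (((M:ℝ)+1)⁻¹) * r ((2*(i:ℝ)+1)/(2*((M:ℝ)+1))) s := by
      intro M; rw [hseq]; simp [Finset.sum_apply]
    rcases s with i | j | k
    · have h := avg_pair_tendsto (CV ((i:ℕ)+1)) (CV (i:ℕ))
      rw [hxva i] at h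
      apply h.congr
      intro M
      rw [happ M]
      refine Finset.sum_congr rfl (fun i' _ => ?_)
      rw [hr]; simp only [Sum.elim_inl]; push_cast; ring
    · have h := avg_pair_tendsto (CU ((j:ℕ)+1)) (CU (j:ℕ))
      rw [hxub j] at h
      apply h.congr
      intro M
      rw [happ M]
      refine Finset.sum_congr rfl (fun i' _ => ?_)
      rw [hr]; simp only [Sum.elim_inr, Sum.elim_inl]; push_cast; ring
    · have h := avg_pair_tendsto (CW ((k:ℕ)+1)) (CW (k:ℕ))
      rw [hxwc k] at h
      apply h.congr
      intro M
      rw [happ M]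
      refine Finset.sum_congr rfl (fun i' _ => ?_)
      rw [hr]; simp only [Sum.elim_inr]; push_cast; ring
  have hclosed : IsClosed (convexHull ℝ ((Q ∩ intZ) ∩ B)) :=
    (hWfin.isCompact_convexHull ℝ).isClosed
  have hxW : x ∈ convexHull ℝ ((Q ∩ intZ) ∩ B) :=
    hclosed.mem_of_tendsto htend (Filter.Eventually.of_forall hseqW)
  exact convexHull_mono Set.inter_subset_left hxW

end AuxLemmas

section entries
variable {p0 p1 p2 p3 p4 : ℕ} {b : Fin p3 → ℤ} {c : Fin (p2 - 1) → ℤ}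
lemma A_v_v (i i' : Fin p0) : batyrevA p0 p1 p2 p3 p4 b c (.inl i) (.inl (.inl i'))
    = if (i : ℕ) = (i' : ℕ) then 1 else 0 := rfl
lemma A_v_u (i : Fin p0) (j : Fin (p4-1)) :
    batyrevA p0 p1 p2 p3 p4 b c (.inl i) (.inl (.inr (.inl j))) = 0 := rfl
lemma A_v_w (i : Fin p0) (k : Fin (p1-1)) :
    batyrevA p0 p1 p2 p3 p4 b c (.inl i) (.inl (.inr (.inr k))) = 0 := rfl
lemma A_v_t (i : Fin p0) (t : Fin p3) :
    batyrevA p0 p1 p2 p3 p4 b c (.inl i) (.inr (.inl t)) = 0 := rfl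
lemma A_v_z (i : Fin p0) (z : Fin (p2-1)) :
    batyrevA p0 p1 p2 p3 p4 b c (.inl i) (.inr (.inr z)) = 0 := rfl
lemma A_u_v (j : Fin p4) (i' : Fin p0) :
    batyrevA p0 p1 p2 p3 p4 b c (.inr (.inl j)) (.inl (.inl i'))
    = if (j : ℕ) = 0 then -1 else 0 := rfl
lemma A_u_u (j : Fin p4) (j' : Fin (p4-1)) :
    batyrevA p0 p1 p2 p3 p4 b c (.inr (.inl j)) (.inl (.inr (.inl j')))
    = if (j : ℕ) = 0 then -1 else if (j : ℕ) = (j' : ℕ) + 1 then 1 else 0 := rfl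
lemma A_u_w (j : Fin p4) (k : Fin (p1-1)) :
    batyrevA p0 p1 p2 p3 p4 b c (.inr (.inl j)) (.inl (.inr (.inr k))) = 0 := rfl
lemma A_u_t (j : Fin p4) (i : Fin p3) :
    batyrevA p0 p1 p2 p3 p4 b c (.inr (.inl j)) (.inr (.inl i))
    = if (j : ℕ) = 0 then b i else 0 := rfl
lemma A_u_z (j : Fin p4) (k : Fin (p2-1)) :
    batyrevA p0 p1 p2 p3 p4 b c (.inr (.inl j)) (.inr (.inr k))
    = if (j : ℕ) = 0 then c k else 0 := rfl
lemma A_y_v (j : Fin p1) (i' : Fin p0) :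
    batyrevA p0 p1 p2 p3 p4 b c (.inr (.inr (.inl j))) (.inl (.inl i'))
    = if (j : ℕ) = 0 then -1 else 0 := rfl
lemma A_y_u (j : Fin p1) (j' : Fin (p4-1)) :
    batyrevA p0 p1 p2 p3 p4 b c (.inr (.inr (.inl j))) (.inl (.inr (.inl j'))) = 0 := rfl
lemma A_y_w (j : Fin p1) (j' : Fin (p1-1)) :
    batyrevA p0 p1 p2 p3 p4 b c (.inr (.inr (.inl j))) (.inl (.inr (.inr j')))
    = if (j : ℕ) = 0 then -1 else if (j : ℕ) = (j' : ℕ) + 1 then 1 else 0 := rfl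
lemma A_y_t (j : Fin p1) (i : Fin p3) :
    batyrevA p0 p1 p2 p3 p4 b c (.inr (.inr (.inl j))) (.inr (.inl i))
    = if (j : ℕ) = 0 then b i + 1 else 0 := rfl
lemma A_y_z (j : Fin p1) (k : Fin (p2-1)) :
    batyrevA p0 p1 p2 p3 p4 b c (.inr (.inr (.inl j))) (.inr (.inr k))
    = if (j : ℕ) = 0 then c k else 0 := rfl
lemma A_t_t (i : Fin p3) (i' : Fin p3) :
    batyrevA p0 p1 p2 p3 p4 b c (.inr (.inr (.inr (.inl i)))) (.inr (.inl i'))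
    = if (i : ℕ) = (i' : ℕ) then 1 else 0 := rfl
lemma A_t_v (i : Fin p3) (s : Fin p0 ⊕ (Fin (p4-1) ⊕ Fin (p1-1))) :
    batyrevA p0 p1 p2 p3 p4 b c (.inr (.inr (.inr (.inl i)))) (.inl s) = 0 := by
  rcases s with _ | (_ | _) <;> rfl
lemma A_t_z (i : Fin p3) (k : Fin (p2-1)) :
    batyrevA p0 p1 p2 p3 p4 b c (.inr (.inr (.inr (.inl i)))) (.inr (.inr k)) = 0 := rfl
lemma A_z_v (j : Fin p2) (s : Fin p0 ⊕ (Fin (p4-1) ⊕ Fin (p1-1))) :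
    batyrevA p0 p1 p2 p3 p4 b c (.inr (.inr (.inr (.inr j)))) (.inl s) = 0 := rfl
lemma A_z_t (j : Fin p2) (i : Fin p3) :
    batyrevA p0 p1 p2 p3 p4 b c (.inr (.inr (.inr (.inr j)))) (.inr (.inl i))
    = if (j : ℕ) = 0 then -1 else 0 := rfl
lemma A_z_z (j : Fin p2) (k : Fin (p2-1)) :
    batyrevA p0 p1 p2 p3 p4 b c (.inr (.inr (.inr (.inr j)))) (.inr (.inr k))
    = if (j : ℕ) = 0 then -1 else if (j : ℕ) = (k : ℕ) + 1 then 1 else 0 := rfl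

variable {d e f : ℤ}
lemma H_v (i : Fin p0) : batyrevH p0 p1 p2 p3 p4 d e f (.inl i)
    = if (i : ℕ) = 0 then d else 0 := rfl
lemma H_u (j : Fin p4) : batyrevH p0 p1 p2 p3 p4 d e f (.inr (.inl j))
    = if (j : ℕ) = 0 then f else 0 := rfl
lemma H_y (j : Fin p1) : batyrevH p0 p1 p2 p3 p4 d e f (.inr (.inr (.inl j))) = 0 := rfl
lemma H_t (i : Fin p3) : batyrevH p0 p1 p2 p3 p4 d e f (.inr (.inr (.inr (.inl i)))) = 0 := rfl
lemma H_z (j : Fin p2) : batyrevH p0 p1 p2 p3 p4 d e f (.inr (.inr (.inr (.inr j))))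
    = if (j : ℕ) = 0 then e + f else 0 := rfl
end entries

section rows
variable {p0 p1 p2 p3 p4 : ℕ} {b : Fin p3 → ℤ} {c : Fin (p2 - 1) → ℤ}
  (y : (Fin p0 ⊕ (Fin (p4 - 1) ⊕ Fin (p1 - 1))) → ℝ) (α : Fin p3 ⊕ Fin (p2 - 1) → ℤ)

lemma row_v (i0 : Fin p0) :
    ∑ j, (batyrevA p0 p1 p2 p3 p4 b c (.inl i0) j : ℝ) * (Sum.elim y (fun j => (α j : ℝ))) j
      = y (.inl i0) := by
  simp [Fintype.sum_sum_type, A_v_v, A_v_u, A_v_w, A_v_t, A_v_z, apply_ite, ite_mul, Fin.val_inj]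

lemma row_u0 (h4 : 0 < p4) :
    ∑ j, (batyrevA p0 p1 p2 p3 p4 b c (.inr (.inl ⟨0, h4⟩)) j : ℝ) *
        (Sum.elim y (fun j => (α j : ℝ))) j
      = -(∑ i, y (.inl i)) - (∑ j, y (.inr (.inl j)))
        + ∑ i, (b i : ℝ) * (α (.inl i) : ℝ) + ∑ k, (c k : ℝ) * (α (.inr k) : ℝ) := by
  simp [Fintype.sum_sum_type, A_u_v, A_u_u, A_u_w, A_u_t, A_u_z, apply_ite, ite_mul, Fin.val_inj]
  ring

lemma row_usucc (n : ℕ) (h : n + 1 < p4) (hn : n < p4 - 1) :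
    ∑ j, (batyrevA p0 p1 p2 p3 p4 b c (.inr (.inl ⟨n + 1, h⟩)) j : ℝ) *
        (Sum.elim y (fun j => (α j : ℝ))) j
      = y (.inr (.inl ⟨n, hn⟩)) := by
  have : ∀ j' : Fin (p4 - 1), ((⟨n + 1, h⟩ : Fin p4) : ℕ) = (j' : ℕ) + 1 ↔ j' = ⟨n, hn⟩ := by
    intro j'; rw [Fin.ext_iff]; constructor <;> intro hh <;> simp_all <;> omega
  simp [Fintype.sum_sum_type, A_u_v, A_u_u, A_u_w, A_u_t, A_u_z, apply_ite, ite_mul, this]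
  rw [Finset.sum_eq_single ⟨n, hn⟩ (fun j _ hj => if_neg (fun h' => hj (Fin.ext h'.symm))) (by simp)]; simp

lemma row_y0 (h1 : 0 < p1) :
    ∑ j, (batyrevA p0 p1 p2 p3 p4 b c (.inr (.inr (.inl ⟨0, h1⟩))) j : ℝ) *
        (Sum.elim y (fun j => (α j : ℝ))) j
      = -(∑ i, y (.inl i)) - (∑ k, y (.inr (.inr k)))
        + ∑ i, ((b i : ℝ) + 1) * (α (.inl i) : ℝ) + ∑ k, (c k : ℝ) * (α (.inr k) : ℝ) := by
  simp [Fintype.sum_sum_type, A_y_v, A_y_u, A_y_w, A_y_t, A_y_z, apply_ite, ite_mul, Fin.val_inj]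
  ring

lemma row_ysucc (n : ℕ) (h : n + 1 < p1) (hn : n < p1 - 1) :
    ∑ j, (batyrevA p0 p1 p2 p3 p4 b c (.inr (.inr (.inl ⟨n + 1, h⟩))) j : ℝ) *
        (Sum.elim y (fun j => (α j : ℝ))) j
      = y (.inr (.inr ⟨n, hn⟩)) := by
  have : ∀ j' : Fin (p1 - 1), ((⟨n + 1, h⟩ : Fin p1) : ℕ) = (j' : ℕ) + 1 ↔ j' = ⟨n, hn⟩ := by
    intro j'; rw [Fin.ext_iff]; constructor <;> intro hh <;> simp_all <;> omega
  simp [Fintype.sum_sum_type, A_y_v, A_y_u, A_y_w, A_y_t, A_y_z, apply_ite, ite_mul, this]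
  rw [Finset.sum_eq_single ⟨n, hn⟩ (fun j _ hj => if_neg (fun h' => hj (Fin.ext h'.symm))) (by simp)]; simp

lemma row_t (i : Fin p3) :
    ∑ j, (batyrevA p0 p1 p2 p3 p4 b c (.inr (.inr (.inr (.inl i)))) j : ℝ) *
        (Sum.elim y (fun j => (α j : ℝ))) j
      = (α (.inl i) : ℝ) := by
  simp [Fintype.sum_sum_type, A_t_t, A_t_v, A_t_z, apply_ite, ite_mul, Fin.val_inj]

lemma row_z0 (h2 : 0 < p2) :
    ∑ j, (batyrevA p0 p1 p2 p3 p4 b c (.inr (.inr (.inr (.inr ⟨0, h2⟩)))) j : ℝ) *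
        (Sum.elim y (fun j => (α j : ℝ))) j
      = -(∑ i, (α (.inl i) : ℝ)) - ∑ k, (α (.inr k) : ℝ) := by
  simp [Fintype.sum_sum_type, A_z_v, A_z_t, A_z_z, apply_ite, ite_mul, Fin.val_inj]
  ring

lemma row_zsucc (n : ℕ) (h : n + 1 < p2) (hn : n < p2 - 1) :
    ∑ j, (batyrevA p0 p1 p2 p3 p4 b c (.inr (.inr (.inr (.inr ⟨n + 1, h⟩)))) j : ℝ) *
        (Sum.elim y (fun j => (α j : ℝ))) j
      = (α (.inr ⟨n, hn⟩) : ℝ) := by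
  have : ∀ j' : Fin (p2 - 1), ((⟨n + 1, h⟩ : Fin p2) : ℕ) = (j' : ℕ) + 1 ↔ j' = ⟨n, hn⟩ := by
    intro j'; rw [Fin.ext_iff]; constructor <;> intro hh <;> simp_all <;> omega
  simp [Fintype.sum_sum_type, A_z_v, A_z_t, A_z_z, apply_ite, ite_mul, this]
  rw [Finset.sum_eq_single ⟨n, hn⟩ (fun j _ hj => if_neg (fun h' => hj (Fin.ext h'.symm))) (by simp)]; simp
end rows


/-- For every lattice point `α` of the projected simplex
(`α_j ≥ 0`, `∑_{j∈J} α_j ≤ e+f`), the slice of the Batyrev polytope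
`P(A, h(d,e,f))` at `α` (identifying `ℝⁿ = ℝ^S × ℝ^J`) is a lattice polytope:
it equals the convex hull of its set of integer points. -/
theorem batyrev_slice_lattice (p0 p1 p2 p3 p4 : ℕ)
    (hp0 : 1 ≤ p0) (hp1 : 1 ≤ p1) (hp2 : 1 ≤ p2) (hp3 : 1 ≤ p3) (hp4 : 1 ≤ p4)
    (b : Fin p3 → ℤ) (c : Fin (p2 - 1) → ℤ)
    (hb : ∀ i, 0 ≤ b i) (hc : ∀ k, 0 ≤ c k)
    (d e f : ℤ) (hd : 0 ≤ d) (he : 0 ≤ e) (hf : 0 ≤ f)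
    (α : Fin p3 ⊕ Fin (p2 - 1) → ℤ)
    (hα : ∀ j, 0 ≤ α j) (hαsum : ∑ j, α j ≤ e + f) :
    {y : (Fin p0 ⊕ (Fin (p4 - 1) ⊕ Fin (p1 - 1))) → ℝ |
        Sum.elim y (fun j => (α j : ℝ)) ∈
          polyP (batyrevA p0 p1 p2 p3 p4 b c) (batyrevH p0 p1 p2 p3 p4 d e f)} =
      convexHull ℝ
        ({y : (Fin p0 ⊕ (Fin (p4 - 1) ⊕ Fin (p1 - 1))) → ℝ |
            Sum.elim y (fun j => (α j : ℝ)) ∈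
              polyP (batyrevA p0 p1 p2 p3 p4 b c) (batyrevH p0 p1 p2 p3 p4 d e f)} ∩ intZ) := by
  classical
  set L : (Fin p0 ⊕ (Fin (p4 - 1) ⊕ Fin (p1 - 1))) → ℤ :=
    Sum.elim (fun i => if (i : ℕ) = 0 then -d else 0) (fun _ => 0) with hLdef
  set F : ℤ := f + ((∑ i, b i * α (.inl i)) + ∑ k, c k * α (.inr k)) with hFdef
  set G : ℤ := (∑ i, (b i + 1) * α (.inl i)) + ∑ k, c k * α (.inr k) with hGdef
  have hαsum' : (∑ i, α (.inl i)) + ∑ k, α (.inr k) ≤ e + f := by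
    rw [← Fintype.sum_sum_type]; exact hαsum
  have hset : {y : (Fin p0 ⊕ (Fin (p4 - 1) ⊕ Fin (p1 - 1))) → ℝ |
        Sum.elim y (fun j => (α j : ℝ)) ∈
          polyP (batyrevA p0 p1 p2 p3 p4 b c) (batyrevH p0 p1 p2 p3 p4 d e f)} =
      {y : (Fin p0 ⊕ (Fin (p4 - 1) ⊕ Fin (p1 - 1))) → ℝ | (∀ s, (L s : ℝ) ≤ y s) ∧
        ((∑ i, y (.inl i)) + ∑ j, y (.inr (.inl j)) ≤ (F:ℝ)) ∧
        ((∑ i, y (.inl i)) + ∑ k, y (.inr (.inr k)) ≤ (G:ℝ))} := by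
    ext y
    simp only [Set.mem_setOf_eq, polyP]
    constructor
    · intro h
      refine ⟨?_, ?_, ?_⟩
      · rintro (i | j | k)
        · have hv := h (.inl i)
          rw [row_v y α i] at hv
          rw [H_v] at hv
          rw [hLdef]
          simp only [Sum.elim_inl]
          split_ifs with h0
          · rw [if_pos h0] at hv; push_cast at hv ⊢; linarith
          · rw [if_neg h0] at hv; push_cast at hv ⊢; linarith
        · have hu := h (.inr (.inl ⟨(j : ℕ) + 1, by omega⟩))
          rw [row_usucc y α (j : ℕ) (by omega) j.isLt] at hu
          rw [H_u] at hu
          simp only [Fin.eta] at hu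
          rw [hLdef]
          simp only [Sum.elim_inr]
          simp at hu ⊢
          linarith
        · have hw := h (.inr (.inr (.inl ⟨(k : ℕ) + 1, by omega⟩)))
          rw [row_ysucc y α (k : ℕ) (by omega) k.isLt] at hw
          rw [H_y] at hw
          simp only [Fin.eta] at hw
          rw [hLdef]
          simp only [Sum.elim_inr]
          simp at hw ⊢
          linarith
      · have hu := h (.inr (.inl ⟨0, by omega⟩))
        rw [row_u0 y α (by omega)] at hu
        rw [H_u] at hu
        norm_num at hu
        have hcast : ((F : ℤ) : ℝ)
            = (f : ℝ) + ((∑ i, (b i : ℝ) * (α (.inl i) : ℝ)) + ∑ k, (c k : ℝ) * (α (.inr k) : ℝ)) := by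
          rw [hFdef]; push_cast; ring
        rw [hcast]
        linarith
      · have hw := h (.inr (.inr (.inl ⟨0, by omega⟩)))
        rw [row_y0 y α (by omega)] at hw
        rw [H_y] at hw
        have hcast : ((G : ℤ) : ℝ)
            = (∑ i, ((b i : ℝ) + 1) * (α (.inl i) : ℝ)) + ∑ k, (c k : ℝ) * (α (.inr k) : ℝ) := by
          rw [hGdef]; push_cast; ring
        rw [hcast]
        push_cast at hw
        linarith
    · rintro ⟨h1, h2, h3⟩ (i | ⟨jv, hjv⟩ | ⟨jy, hjy⟩ | it | ⟨jz, hjz⟩)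
      · rw [row_v y α i, H_v]
        have hv := h1 (.inl i)
        rw [hLdef] at hv
        simp only [Sum.elim_inl] at hv
        split_ifs with h0
        · rw [if_pos h0] at hv; push_cast at hv ⊢; linarith
        · rw [if_neg h0] at hv; push_cast at hv ⊢; linarith
      · match jv, hjv with
        | 0, hjv =>
          rw [row_u0 y α (by omega), H_u]
          norm_num
          have hcast : ((F : ℤ) : ℝ)
              = (f : ℝ) + ((∑ i, (b i : ℝ) * (α (.inl i) : ℝ)) + ∑ k, (c k : ℝ) * (α (.inr k) : ℝ)) := by
            rw [hFdef]; push_cast; ring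
          rw [hcast] at h2
          linarith
        | n + 1, hjv =>
          have hn : n < p4 - 1 := by omega
          rw [row_usucc y α n hjv hn, H_u]
          have := h1 (.inr (.inl ⟨n, hn⟩))
          rw [hLdef] at this
          simp only [Sum.elim_inr] at this
          simp at this ⊢
          linarith
      · match jy, hjy with
        | 0, hjy =>
          rw [row_y0 y α (by omega), H_y]
          have hcast : ((G : ℤ) : ℝ)
              = (∑ i, ((b i : ℝ) + 1) * (α (.inl i) : ℝ)) + ∑ k, (c k : ℝ) * (α (.inr k) : ℝ) := by
            rw [hGdef]; push_cast; ring
          rw [hcast] at h3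
          push_cast
          linarith
        | n + 1, hjy =>
          have hn : n < p1 - 1 := by omega
          rw [row_ysucc y α n hjy hn, H_y]
          have := h1 (.inr (.inr ⟨n, hn⟩))
          rw [hLdef] at this
          simp only [Sum.elim_inr] at this
          simp at this ⊢
          linarith
      · rw [row_t y α it, H_t]
        have := hα (.inl it)
        simp only [Int.cast_zero, neg_zero]
        exact_mod_cast this
      · match jz, hjz with
        | 0, hjz =>
          rw [row_z0 y α (by omega), H_z]
          norm_num
          have hcast : (((e + f : ℤ)) : ℝ) = (e : ℝ) + (f : ℝ) := by push_cast; ring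
          have hsum : ((∑ i, α (.inl i) : ℤ) : ℝ) + ((∑ k, α (.inr k) : ℤ) : ℝ) ≤ (e : ℝ) + (f : ℝ) := by
            exact_mod_cast hαsum'
          push_cast at hsum ⊢
          linarith
        | n + 1, hjz =>
          have hn : n < p2 - 1 := by omega
          rw [row_zsucc y α n hjz hn, H_z]
          have := hα (.inr ⟨n, hn⟩)
          simp
          exact_mod_cast this
  rw [hset]
  exact key_lattice p0 (p4 - 1) (p1 - 1) L F G
end
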